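/- arXiv:1801.09369 — 5 statements merged into one kernel-verified Lean document; each statement's English description precedes it below -/
import Mathlib

section
/- For every regular uncountable cardinal κ, the reaping number r(κ) is at least the bounding number b(κ). -/
open Cardinal Set

/-- `A` is a subset of `κ` (identified with `Iio κ.ord`) of full cardinality `κ`,
i.e. `A ∈ [κ]^κ`. -/
def IsBig (κ : Cardinal.{0}) (A : Set Ordinal) : Prop :=
  A ⊆ Set.Iio κ.ord ∧ #A = Cardinal.lift.{1} κ

/-- `f` represents a function in `κ^κ`. -/
def FunOn (κ : Cardinal.{0}) (f : Ordinal → Ordinal) : Prop :=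
  ∀ o < κ.ord, f o < κ.ord

/-- `f ≤* g` : the set of `α < κ` with `g α < f α` has cardinality `< κ`. -/
def LeStar (κ : Cardinal.{0}) (f g : Ordinal → Ordinal) : Prop :=
  #({α : Ordinal | α < κ.ord ∧ g α < f α} : Set Ordinal) < Cardinal.lift.{1} κ

/-- `F ⊆ κ^κ` is `*`-unbounded. -/
def UnboundedFam (κ : Cardinal.{0}) (F : Set (Ordinal → Ordinal)) : Prop :=
  (∀ f ∈ F, FunOn κ f) ∧ ¬ ∃ g, FunOn κ g ∧ ∀ f ∈ F, LeStar κ f g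

/-- `F ⊆ κ^κ` is `*`-dominating. -/
def DominatingFam (κ : Cardinal.{0}) (F : Set (Ordinal → Ordinal)) : Prop :=
  (∀ f ∈ F, FunOn κ f) ∧ ∀ g, FunOn κ g → ∃ f ∈ F, LeStar κ g f

/-- The bounding number `𝔟(κ)`. -/
noncomputable def boundingNum (κ : Cardinal.{0}) : Cardinal.{1} :=
  sInf { c | ∃ F : Set (Ordinal → Ordinal), UnboundedFam κ F ∧ #F = c }

/-- The dominating number `𝔡(κ)`. -/
noncomputable def dominatingNum (κ : Cardinal.{0}) : Cardinal.{1} :=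
  sInf { c | ∃ F : Set (Ordinal → Ordinal), DominatingFam κ F ∧ #F = c }

/-- `B` reaps the family `F ⊆ [κ]^κ`. -/
def Reaps (κ : Cardinal.{0}) (B : Set Ordinal) (F : Set (Set Ordinal)) : Prop :=
  B ⊆ Set.Iio κ.ord ∧ ∀ A ∈ F,
    #(A ∩ B : Set Ordinal) = Cardinal.lift.{1} κ ∧
    #(A ∩ (Set.Iio κ.ord \ B) : Set Ordinal) = Cardinal.lift.{1} κ

/-- `F ⊆ [κ]^κ` is an unreaped family. -/
def UnreapedFam (κ : Cardinal.{0}) (F : Set (Set Ordinal)) : Prop :=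
  (∀ A ∈ F, IsBig κ A) ∧ ¬ ∃ B, Reaps κ B F

/-- The reaping number `𝔯(κ)`. -/
noncomputable def reapingNum (κ : Cardinal.{0}) : Cardinal.{1} :=
  sInf { c | ∃ F : Set (Set Ordinal), UnreapedFam κ F ∧ #F = c }

/-- `A` and `B` are almost disjoint: `|A ∩ B| < κ`. -/
def AlmostDisjoint (κ : Cardinal.{0}) (A B : Set Ordinal) : Prop :=
  #(A ∩ B : Set Ordinal) < Cardinal.lift.{1} κ

/-- `𝒜 ⊆ [κ]^κ` is an almost disjoint family. -/
def ADFamily (κ : Cardinal.{0}) (𝒜 : Set (Set Ordinal)) : Prop :=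
  (∀ A ∈ 𝒜, IsBig κ A) ∧ ∀ A ∈ 𝒜, ∀ B ∈ 𝒜, A ≠ B → AlmostDisjoint κ A B

/-- `𝒜 ⊆ [κ]^κ` is a maximal almost disjoint family. -/
def MADFamily (κ : Cardinal.{0}) (𝒜 : Set (Set Ordinal)) : Prop :=
  ADFamily κ 𝒜 ∧ Cardinal.lift.{1} κ ≤ #𝒜 ∧
    ∀ B, IsBig κ B → ∃ A ∈ 𝒜, ¬ AlmostDisjoint κ A B

/-- The almost disjointness number `𝔞(κ)`. -/
noncomputable def adNum (κ : Cardinal.{0}) : Cardinal.{1} :=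
  sInf { c | ∃ 𝒜 : Set (Set Ordinal), MADFamily κ 𝒜 ∧ #𝒜 = c }

/-- `E` is a club (closed unbounded set) in the ordinal `o`. -/
def IsClubIn (E : Set Ordinal) (o : Ordinal) : Prop :=
  E ⊆ Set.Iio o ∧ (∀ x < o, ∃ e ∈ E, x ≤ e) ∧
    ∀ x < o, x ≠ 0 → sSup (E ∩ Set.Iio x) = x → x ∈ E

/-- `S` is stationary in the ordinal `o`. -/
def IsStationaryIn (S : Set Ordinal) (o : Ordinal) : Prop :=
  S ⊆ Set.Iio o ∧ ∀ E, IsClubIn E o → (S ∩ E).Nonempty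

/-- `s_A(α) = min (A \ (α+1))`, the least element of `A` above `α`. -/
noncomputable def succIn (A : Set Ordinal) (α : Ordinal) : Ordinal :=
  sInf {β | β ∈ A ∧ α < β}

/-- `set(E₁, ξ) = [ξ, s_{E₁}(ξ))`. -/
def blockSet (E₁ : Set Ordinal) (ξ : Ordinal) : Set Ordinal :=
  {ζ | ξ ≤ ζ ∧ ζ < succIn E₁ ξ}

/-- `set(E₂, E₁) = ⋃_{ξ ∈ E₂} set(E₁, ξ)`. -/
def setSet (E₂ E₁ : Set Ordinal) : Set Ordinal :=
  ⋃ ξ ∈ E₂, blockSet E₁ ξ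

/-- `A ⊆* B` mod `κ` : `|A \ B| < κ`. -/
def SubsetStar (κ : Cardinal.{0}) (A B : Set Ordinal) : Prop :=
  #(A \ B : Set Ordinal) < Cardinal.lift.{1} κ

/-- The weak power `λ^[κ]`. -/
noncomputable def weakPower (l k : Cardinal.{0}) : Cardinal.{1} :=
  sInf { c | ∃ P : Set (Set Ordinal),
    (∀ v ∈ P, v ⊆ Set.Iio l.ord ∧ #v ≤ Cardinal.lift.{1} k) ∧ #P = c ∧
    ∀ u : Set Ordinal, u ⊆ Set.Iio l.ord → #u = Cardinal.lift.{1} k →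
      ∃ P₀ ⊆ P, #P₀ < Cardinal.lift.{1} k ∧ u = ⋃₀ P₀ }

/-- Shelah's revised GCH, a theorem of ZFC. -/
def RevisedGCH : Prop :=
  ∀ θ lam : Cardinal.{0}, ℵ₀ < θ → θ.IsStrongLimit → θ ≤ lam →
    ∃ σ < θ, ∀ k, σ ≤ k → k < θ → weakPower lam k = Cardinal.lift.{1} lam


section Stmt1Aux

open Ordinal

variable {κ : Cardinal.{0}}

lemma mk_Iio_ord (κ : Cardinal.{0}) : #(Set.Iio κ.ord) = Cardinal.lift.{1} κ := by
  rw [Ordinal.mk_Iio_ordinal, Cardinal.card_ord]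

lemma big_unbounded (hκ : ℵ₀ ≤ κ) {A : Set Ordinal} (hA : IsBig κ A) {o : Ordinal}
    (ho : o < κ.ord) : ∃ β ∈ A, o < β := by
  by_contra h
  push_neg at h
  have hsub : A ⊆ Set.Iio (o + 1) := by
    intro β hβ
    have := h β hβ
    simp only [Set.mem_Iio, Ordinal.add_one_eq_succ, Order.lt_succ_iff]
    exact this
  have h1 : #A ≤ #(Set.Iio (o + 1)) := Cardinal.mk_le_mk_of_subset hsub
  have h2 : #(Set.Iio (o + 1)) < Cardinal.lift.{1} κ := by
    rw [Ordinal.mk_Iio_ordinal, Cardinal.lift_lt]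
    rw [← Cardinal.lt_ord]
    rw [Ordinal.add_one_eq_succ]
    exact (Cardinal.isSuccLimit_ord hκ).succ_lt ho
  rw [hA.2] at h1
  exact absurd h1 (not_le.2 h2)

lemma succIn_spec (hκ : ℵ₀ ≤ κ) {A : Set Ordinal} (hA : IsBig κ A) {o : Ordinal}
    (ho : o < κ.ord) : succIn A o ∈ A ∧ o < succIn A o := by
  have hne : {β | β ∈ A ∧ o < β}.Nonempty := by
    obtain ⟨β, h1, h2⟩ := big_unbounded hκ hA ho
    exact ⟨β, h1, h2⟩
  exact csInf_mem hne

lemma succIn_lt_ord (hκ : ℵ₀ ≤ κ) {A : Set Ordinal} (hA : IsBig κ A) {o : Ordinal}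
    (ho : o < κ.ord) : succIn A o < κ.ord :=
  hA.1 (succIn_spec hκ hA ho).1

lemma mk_diff_big (hκ : ℵ₀ ≤ κ) {T : Set Ordinal} (hT : T ⊆ Set.Iio κ.ord)
    (hTc : #T < Cardinal.lift.{1} κ) :
    #(Set.Iio κ.ord \ T : Set Ordinal) = Cardinal.lift.{1} κ := by
  have h := Cardinal.mk_diff_add_mk hT
  rw [mk_Iio_ord] at h
  have hκ' : ℵ₀ ≤ Cardinal.lift.{1} κ := Cardinal.aleph0_le_lift.2 hκ
  by_contra hne
  have hlt : #(Set.Iio κ.ord \ T : Set Ordinal) < Cardinal.lift.{1} κ := by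
    refine lt_of_le_of_ne ?_ hne
    calc #(Set.Iio κ.ord \ T : Set Ordinal)
        ≤ #(Set.Iio κ.ord \ T : Set Ordinal) + #T := le_self_add
      _ = Cardinal.lift.{1} κ := h
  exact absurd h (ne_of_lt (Cardinal.add_lt_of_lt hκ' hlt hTc))

lemma unreaped_univ (hκ : ℵ₀ < κ) : UnreapedFam κ {A | IsBig κ A} := by
  constructor
  · exact fun A hA => hA
  · rintro ⟨B, hBsub, hB⟩
    by_cases hb : #B = Cardinal.lift.{1} κ
    · have h2 := (hB B ⟨hBsub, hb⟩).2
      have hemp : (B ∩ (Set.Iio κ.ord \ B) : Set Ordinal) = ∅ := by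
        ext x; simp only [Set.mem_inter_iff, Set.mem_diff, Set.mem_empty_iff_false, iff_false]
        tauto
      rw [hemp] at h2
      simp only [Cardinal.mk_emptyCollection] at h2
      have : (0 : Cardinal.{1}) < Cardinal.lift.{1} κ :=
        (Cardinal.aleph0_pos).trans_le (Cardinal.aleph0_le_lift.2 hκ.le)
      exact absurd h2.symm (ne_of_gt this)
    · have h1 := (hB (Set.Iio κ.ord) ⟨subset_rfl, mk_Iio_ord κ⟩).1
      rw [Set.inter_eq_self_of_subset_right hBsub] at h1
      exact hb h1

lemma two_mul_add_one_lt (hκ : ℵ₀ ≤ κ) {ι : Ordinal} (hι : ι < κ.ord) :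
    2 * ι + 1 < κ.ord := by
  rw [Cardinal.lt_ord] at hι ⊢
  rw [Ordinal.card_add, Ordinal.card_mul]
  have h2 : (2 : Ordinal).card < κ := by
    have : ((2 : ℕ) : Cardinal) < ℵ₀ := Cardinal.nat_lt_aleph0 2
    simpa using this.trans_le hκ
  have h1 : (1 : Ordinal).card < κ := by
    simpa using (Cardinal.one_lt_aleph0).trans_le hκ
  exact Cardinal.add_lt_of_lt hκ (Cardinal.mul_lt_of_lt hκ h2 hι) h1

lemma two_mul_lt (hκ : ℵ₀ ≤ κ) {ι : Ordinal} (hι : ι < κ.ord) : 2 * ι < κ.ord :=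
  lt_of_le_of_lt (le_self_add) (two_mul_add_one_lt hκ hι)

lemma two_mul_succ (ι : Ordinal) : 2 * (ι + 1) = 2 * ι + 2 := by
  rw [Ordinal.add_one_eq_succ, Ordinal.mul_succ]

/-- The heart of the argument: from an unreaped family we get an unbounded family. -/
lemma unbounded_of_unreaped (hreg : κ.IsRegular) (hunc : ℵ₀ < κ) {F : Set (Set Ordinal)}
    (hF : UnreapedFam κ F) : UnboundedFam κ ((fun A => succIn A) '' F) := by
  have hκ : ℵ₀ ≤ κ := hreg.aleph0_le
  constructor
  · rintro f ⟨A, hA, rfl⟩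
    intro o ho
    exact succIn_lt_ord hκ (hF.1 A hA) ho
  rintro ⟨g, hg, hdom⟩
  -- extend g to all ordinals
  set gg : Ordinal → Ordinal := fun α => if α < κ.ord then g α else α with hggdef
  have hgg : ∀ α < κ.ord, gg α = g α := fun α hα => if_pos hα
  have hgglt : ∀ α < κ.ord, gg α < κ.ord := fun α hα => by rw [hgg α hα]; exact hg α hα
  -- the pointwise bounding function
  set h : Ordinal → Ordinal := fun α => Ordinal.blsub (α + 1) (fun β _ => max β (gg β)) with hhdef
  have hβh : ∀ β α : Ordinal, β ≤ α → gg β < h α := by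
    intro β α hβα
    have hβ : β < α + 1 := by
      rw [Ordinal.add_one_eq_succ, Order.lt_succ_iff]; exact hβα
    exact lt_of_le_of_lt (le_max_right _ _) (Ordinal.lt_blsub _ β hβ)
  have hαh : ∀ α : Ordinal, α < h α := by
    intro α
    have hβ : α < α + 1 := by rw [Ordinal.add_one_eq_succ]; exact Order.lt_succ α
    exact lt_of_le_of_lt (le_max_left _ _) (Ordinal.lt_blsub _ α hβ)
  have hh : ∀ α < κ.ord, h α < κ.ord := by
    intro α hα
    refine Ordinal.blsub_lt_ord ?_ ?_
    · rw [hreg.cof_eq, ← Cardinal.lt_ord, Ordinal.add_one_eq_succ]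
      exact (Cardinal.isSuccLimit_ord hκ).succ_lt hα
    · intro β hβ
      have hβκ : β < κ.ord := by
        have : β < α + 1 := hβ
        rw [Ordinal.add_one_eq_succ, Order.lt_succ_iff] at this
        exact lt_of_le_of_lt this hα
      exact max_lt hβκ (hgglt β hβκ)
  -- closure points of gg
  set C : Set Ordinal := {δ | ∀ β < δ, gg β < δ} with hCdef
  have hCtail : ∀ δ : Ordinal, κ.ord ≤ δ → δ ∈ C := by
    intro δ hδ β hβ
    by_cases hβκ : β < κ.ord
    · rw [hgg β hβκ]; exact lt_of_lt_of_le (hg β hβκ) hδ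
    · show (if β < κ.ord then g β else β) < δ
      rw [if_neg hβκ]; exact hβ
  have hCunb : ¬ BddAbove C := by
    rintro ⟨b, hb⟩
    have hmem : max b κ.ord + 1 ∈ C :=
      hCtail _ (le_trans (le_max_right _ _) (le_of_lt (by
        rw [Ordinal.add_one_eq_succ]; exact Order.lt_succ _)))
    have := hb hmem
    have hlt : b < max b κ.ord + 1 := by
      rw [Ordinal.add_one_eq_succ]
      exact lt_of_le_of_lt (le_max_left _ _) (Order.lt_succ _)
    exact absurd this (not_le.2 hlt)
  -- C is unbounded below κ.ord
  have hCκ : ∀ a < κ.ord, ∃ δ ∈ C, a < δ ∧ δ < κ.ord := by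
    intro a ha
    have hiter : ∀ n : ℕ, h^[n] a < κ.ord := by
      intro n
      induction n with
      | zero => exact ha
      | succ n ih => rw [Function.iterate_succ_apply']; exact hh _ ih
    have hbdd : BddAbove (Set.range fun n : ℕ => h^[n] a) := Ordinal.bddAbove_range _
    set δ : Ordinal := ⨆ n : ℕ, h^[n] a with hδdef
    have hδκ : δ < κ.ord := by
      refine Ordinal.iSup_lt_ord ?_ hiter
      rw [Cardinal.mk_nat, hreg.cof_eq]
      exact hunc
    have hle : ∀ n : ℕ, h^[n] a ≤ δ := fun n => le_ciSup hbdd n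
    refine ⟨δ, ?_, ?_, hδκ⟩
    · intro β hβ
      have hex : ∃ n : ℕ, β < h^[n] a := by
        by_contra hcon
        push_neg at hcon
        exact absurd (ciSup_le hcon) (not_le.2 hβ)
      obtain ⟨n, hn⟩ := hex
      calc gg β < h (h^[n] a) := hβh _ _ hn.le
        _ = h^[n + 1] a := (Function.iterate_succ_apply' h n a).symm
        _ ≤ δ := hle (n + 1)
    · calc a < h a := hαh a
        _ = h^[1] a := by rw [Function.iterate_one]
        _ ≤ δ := hle 1
  -- the enumeration of C
  set e : Ordinal → Ordinal := Ordinal.enumOrd C with hedef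
  have hemono : StrictMono e := Ordinal.enumOrd_strictMono hCunb
  have hemem : ∀ ι, e ι ∈ C := fun ι => Ordinal.enumOrd_mem hCunb ι
  have helt : ∀ ι < κ.ord, e ι < κ.ord := by
    intro ι
    induction ι using Ordinal.induction with
    | h ι IH =>
      intro hι
      have ha : Ordinal.blsub ι (fun ξ _ => e ξ) < κ.ord := by
        refine Ordinal.blsub_lt_ord ?_ ?_
        · rw [hreg.cof_eq]; exact Cardinal.lt_ord.mp hι
        · exact fun ξ hξ => IH ξ hξ (hξ.trans hι)
      obtain ⟨δ, hδC, hδgt, hδκ⟩ := hCκ _ ha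
      have hle : e ι ≤ δ := by
        rw [hedef]
        exact Ordinal.enumOrd_le_of_forall_lt hδC (fun ξ hξ => (Ordinal.lt_blsub _ ξ hξ).trans hδgt)
      exact hle.trans_lt hδκ
  have hsucclt : ∀ μ : Ordinal, e μ < e (μ + 1) := by
    intro μ
    apply hemono
    rw [Ordinal.add_one_eq_succ]; exact Order.lt_succ μ
  have hblock : ∀ μ : Ordinal, μ < κ.ord → g (e μ) < e (μ + 1) := by
    intro μ hμ
    have := hemem (μ + 1) (e μ) (hsucclt μ)
    rwa [hgg _ (helt μ hμ)] at this
  -- the reaping set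
  set B : Set Ordinal :=
    {ζ | ζ < κ.ord ∧ ∃ ι, e (2 * ι) ≤ ζ ∧ ζ < e (2 * ι + 1)} with hBdef
  -- bad sets
  have hbad : ∀ A ∈ F, #({α : Ordinal | α < κ.ord ∧ g α < succIn A α} : Set Ordinal)
      < Cardinal.lift.{1} κ := by
    intro A hA
    exact hdom (succIn A) ⟨A, hA, rfl⟩
  -- capture lemma
  have hcapture : ∀ A ∈ F, ∀ μ < κ.ord,
      ¬ (g (e μ) < succIn A (e μ)) →
      succIn A (e μ) ∈ A ∧ e μ < succIn A (e μ) ∧ succIn A (e μ) < e (μ + 1) := by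
    intro A hA μ hμ hgood
    have hAbig := hF.1 A hA
    have heμ := helt μ hμ
    obtain ⟨h1, h2⟩ := succIn_spec hκ hAbig heμ
    exact ⟨h1, h2, lt_of_le_of_lt (not_lt.1 hgood) (hblock μ hμ)⟩
  -- the counting lemma, parametrized by the offset (0 for B, 1 for the complement)
  have hcount : ∀ A ∈ F, ∀ T : Set Ordinal, ∀ u : Ordinal → Ordinal,
      (∀ ι ι' : Ordinal, ι < ι' → u ι + 1 ≤ u ι') →
      (∀ ι < κ.ord, u ι < κ.ord) →
      (∀ ι < κ.ord, ¬ (g (e (u ι)) < succIn A (e (u ι))) → succIn A (e (u ι)) ∈ T) →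
      #(A ∩ T : Set Ordinal) = Cardinal.lift.{1} κ := by
    intro A hA T u humono huκ huT
    have hAbig := hF.1 A hA
    set bad : Set Ordinal := {α : Ordinal | α < κ.ord ∧ g α < succIn A α} with hbaddef
    set badIdx : Set Ordinal := {ι | ι < κ.ord ∧ e (u ι) ∈ bad} with hbadIdxdef
    have hbadIdx : #badIdx < Cardinal.lift.{1} κ := by
      have hinj : Set.InjOn (fun ι => e (u ι)) badIdx := by
        intro ι _ ι' _ hee
        by_contra hne
        rcases lt_or_gt_of_ne hne with hlt | hlt
        · have : e (u ι) < e (u ι') := hemono (lt_of_lt_of_le (by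
            rw [Ordinal.add_one_eq_succ]; exact Order.lt_succ _) (humono _ _ hlt))
          exact absurd hee (ne_of_lt this)
        · have : e (u ι') < e (u ι) := hemono (lt_of_lt_of_le (by
            rw [Ordinal.add_one_eq_succ]; exact Order.lt_succ _) (humono _ _ hlt))
          exact absurd hee.symm (ne_of_lt this)
      have hmap : ∀ ι ∈ badIdx, e (u ι) ∈ bad := fun ι hι => hι.2
      calc #badIdx = #((fun ι => e (u ι)) '' badIdx) :=
            (Cardinal.mk_image_eq_of_injOn _ _ hinj).symm
        _ ≤ #bad := Cardinal.mk_le_mk_of_subset (by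
            rintro x ⟨ι, hι, rfl⟩; exact hmap ι hι)
        _ < Cardinal.lift.{1} κ := hbad A hA
    set good : Set Ordinal := Set.Iio κ.ord \ badIdx with hgooddef
    have hgood : #good = Cardinal.lift.{1} κ :=
      mk_diff_big hκ (fun ι hι => hι.1) hbadIdx
    set φ : Ordinal → Ordinal := fun ι => succIn A (e (u ι)) with hφdef
    have hφspec : ∀ ι ∈ good, φ ι ∈ A ∧ e (u ι) < φ ι ∧ φ ι < e (u ι + 1) := by
      intro ι hι
      have hικ : ι < κ.ord := hι.1
      have hnotbad : ¬ (g (e (u ι)) < succIn A (e (u ι))) := by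
        intro hcon
        exact hι.2 ⟨hικ, helt _ (huκ ι hικ), hcon⟩
      exact hcapture A hA (u ι) (huκ ι hικ) hnotbad
    have hφT : ∀ ι ∈ good, φ ι ∈ T := by
      intro ι hι
      have hικ : ι < κ.ord := hι.1
      have hnotbad : ¬ (g (e (u ι)) < succIn A (e (u ι))) := by
        intro hcon
        exact hι.2 ⟨hικ, helt _ (huκ ι hικ), hcon⟩
      exact huT ι hικ hnotbad
    have hφmono : ∀ ι ∈ good, ∀ ι' ∈ good, ι < ι' → φ ι < φ ι' := by
      intro ι hι ι' hι' hlt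
      calc φ ι < e (u ι + 1) := (hφspec ι hι).2.2
        _ ≤ e (u ι') := hemono.monotone (humono _ _ hlt)
        _ < φ ι' := (hφspec ι' hι').2.1
    have hinj : Set.InjOn φ good := by
      intro ι hι ι' hι' hee
      by_contra hne
      rcases lt_or_gt_of_ne hne with hlt | hlt
      · exact absurd hee (ne_of_lt (hφmono ι hι ι' hι' hlt))
      · exact absurd hee.symm (ne_of_lt (hφmono ι' hι' ι hι hlt))
    have hsub : φ '' good ⊆ A ∩ T := by
      rintro x ⟨ι, hι, rfl⟩
      exact ⟨(hφspec ι hι).1, hφT ι hι⟩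
    have hge : Cardinal.lift.{1} κ ≤ #(A ∩ T : Set Ordinal) := by
      calc Cardinal.lift.{1} κ = #good := hgood.symm
        _ = #(φ '' good) := (Cardinal.mk_image_eq_of_injOn _ _ hinj).symm
        _ ≤ #(A ∩ T : Set Ordinal) := Cardinal.mk_le_mk_of_subset hsub
    have hle : #(A ∩ T : Set Ordinal) ≤ Cardinal.lift.{1} κ := by
      rw [← mk_Iio_ord (κ := κ)]
      exact Cardinal.mk_le_mk_of_subset (fun x hx => hAbig.1 hx.1)
    exact le_antisymm hle hge
  -- B reaps F : contradiction
  refine absurd ?_ hF.2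
  refine ⟨B, fun ζ hζ => hζ.1, ?_⟩
  intro A hA
  constructor
  · -- A ∩ B has size κ, via even blocks
    refine hcount A hA B (fun ι => 2 * ι) ?_ ?_ ?_
    · intro ι ι' hlt
      have h1 : 2 * ι + 1 < 2 * (ι + 1) := by
        rw [two_mul_succ]
        exact (add_lt_add_iff_left (2 * ι)).2 (by norm_num : (1 : Ordinal) < 2)
      have h2 : 2 * (ι + 1) ≤ 2 * ι' := by
        apply mul_le_mul_right
        rw [Ordinal.add_one_eq_succ, Order.succ_le_iff]
        exact hlt
      calc 2 * ι + 1 ≤ 2 * (ι + 1) := h1.le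
        _ ≤ 2 * ι' := h2
    · exact fun ι hι => two_mul_lt hκ hι
    · intro ι hι hnotbad
      obtain ⟨hmem, hlo, hhi⟩ := hcapture A hA (2 * ι) (two_mul_lt hκ hι) hnotbad
      have hκ' : succIn A (e (2 * ι)) < κ.ord :=
        succIn_lt_ord hκ (hF.1 A hA) (helt _ (two_mul_lt hκ hι))
      exact ⟨hκ', ι, hlo.le, hhi⟩
  · -- A ∩ (Iio κ.ord \ B) has size κ, via odd blocks
    refine hcount A hA (Set.Iio κ.ord \ B) (fun ι => 2 * ι + 1) ?_ ?_ ?_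
    · intro ι ι' hlt
      have h2 : 2 * (ι + 1) ≤ 2 * ι' := by
        apply mul_le_mul_right
        rw [Ordinal.add_one_eq_succ, Order.succ_le_iff]
        exact hlt
      calc 2 * ι + 1 + 1 = 2 * (ι + 1) := by rw [two_mul_succ, add_assoc]; norm_num
        _ ≤ 2 * ι' := h2
        _ ≤ 2 * ι' + 1 := le_self_add
    · exact fun ι hι => two_mul_add_one_lt hκ hι
    · intro ι hι hnotbad
      obtain ⟨hmem, hlo, hhi⟩ := hcapture A hA (2 * ι + 1) (two_mul_add_one_lt hκ hι) hnotbad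
      have hκ' : succIn A (e (2 * ι + 1)) < κ.ord :=
        succIn_lt_ord hκ (hF.1 A hA) (helt _ (two_mul_add_one_lt hκ hι))
      refine ⟨hκ', ?_⟩
      rintro ⟨-, ι', hlo', hhi'⟩
      -- succIn A (e (2ι+1)) lies in [e (2ι'), e(2ι'+1)) but also in (e(2ι+1), e(2(ι+1)))
      rcases le_or_gt (ι' + 1) (ι + 1) with hle | hlt
      · -- ι' ≤ ι, so e (2ι'+1) ≤ e (2ι+1) < succIn ...
        have hι'ι : ι' ≤ ι := by
          rwa [Ordinal.add_one_eq_succ, Ordinal.add_one_eq_succ, Order.succ_le_succ_iff] at hle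
        have : e (2 * ι' + 1) ≤ e (2 * ι + 1) :=
          hemono.monotone (add_le_add_left (mul_le_mul_right hι'ι 2) 1)
        exact absurd (hhi'.trans_le this) (not_lt.2 hlo.le)
      · -- ι + 1 ≤ ι', so succIn ... < e (2(ι+1)) ≤ e (2ι')
        have hι1ι' : ι + 1 ≤ ι' := by
          rwa [Ordinal.add_one_eq_succ, Ordinal.add_one_eq_succ, Order.succ_lt_succ_iff,
            ← Order.succ_le_iff, ← Ordinal.add_one_eq_succ] at hlt
        have hhi2 : succIn A (e (2 * ι + 1)) < e (2 * (ι + 1)) := by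
          have heq : 2 * ι + 1 + 1 = 2 * (ι + 1) := by
            rw [two_mul_succ, add_assoc]; norm_num
          rw [← heq]
          exact hhi
        have : e (2 * (ι + 1)) ≤ e (2 * ι') := hemono.monotone (mul_le_mul_right hι1ι' 2)
        exact absurd (hhi2.trans_le this) (not_lt.2 hlo')

end Stmt1Aux

/-- For every regular uncountable `κ`, `𝔟(κ) ≤ 𝔯(κ)`. -/
theorem stmt1 (κ : Cardinal.{0}) (hreg : κ.IsRegular) (hunc : ℵ₀ < κ) :
    boundingNum κ ≤ reapingNum κ := by
  have hne : {c | ∃ F : Set (Set Ordinal), UnreapedFam κ F ∧ #F = c}.Nonempty :=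
    ⟨_, {A | IsBig κ A}, unreaped_univ hunc, rfl⟩
  refine le_csInf hne ?_
  rintro c ⟨F, hF, rfl⟩
  calc boundingNum κ ≤ #((fun A => succIn A) '' F) :=
        csInf_le' ⟨_, unbounded_of_unreaped hreg hunc hF, rfl⟩
    _ ≤ #F := Cardinal.mk_image_le
end

section
/- Let κ be a regular uncountable cardinal. Suppose there exists a sequence ⟨f_δ : δ < κ⁺⟩ of functions in κ^κ such that for every g ∈ κ^κ there is δ < κ⁺ with {α < κ : g(α) < f_δ(α)} stationary in κ. Then there is a maximal almost disjoint family in [κ]^κ of cardinality κ⁺, hence a(κ) = κ⁺. -/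
open Cardinal Set

open Cardinal Set Order

namespace Stmt3Proof

noncomputable def xiF (u : Ordinal.{0} → Ordinal.{0} → Ordinal.{0}) (i : Ordinal.{0}) : Ordinal.{0} :=
  ⨆ j : (Set.Iio i), u j.1 (xiF u j.1)
termination_by i
decreasing_by exact j.2

theorem xiF_def (u : Ordinal.{0} → Ordinal → Ordinal) (i : Ordinal) :
    xiF u i = ⨆ j : (Set.Iio i), u j.1 (xiF u j.1) := by
  rw [xiF]

theorem le_xiF (u : Ordinal.{0} → Ordinal → Ordinal) {j i : Ordinal} (hj : j < i) :
    u j (xiF u j) ≤ xiF u i := by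
  conv_rhs => rw [xiF_def]
  exact Ordinal.le_iSup (fun j : Set.Iio i => u j.1 (xiF u j.1)) ⟨j, hj⟩

section
variable {u : Ordinal.{0} → Ordinal → Ordinal} (hu : ∀ j x, x < u j x)
include hu

theorem xiF_lt_xiF {j i : Ordinal} (h : j < i) : xiF u j < xiF u i :=
  (hu j _).trans_le (le_xiF u h)

theorem xiF_mono {j i : Ordinal} (h : j ≤ i) : xiF u j ≤ xiF u i := by
  rcases eq_or_lt_of_le h with rfl | h
  · exact le_rfl
  · exact (xiF_lt_xiF hu h).le

theorem le_self_xiF (i : Ordinal) : i ≤ xiF u i := by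
  induction i using Ordinal.induction with
  | h i ih =>
    rcases Ordinal.zero_or_succ_or_isSuccLimit i with h0 | ⟨j, rfl⟩ | hlim
    · simp [h0]
    · have h1 : j < succ j := lt_succ j
      have h2 : j < xiF u (succ j) := (ih j h1).trans_lt (xiF_lt_xiF hu h1)
      exact Order.succ_le_of_lt h2
    · apply le_of_forall_lt
      intro j hj
      exact (ih j hj).trans_lt (xiF_lt_xiF hu hj)

theorem xiF_succ (i : Ordinal) : xiF u (i + 1) = u i (xiF u i) := by
  rw [Ordinal.add_one_eq_succ]
  apply le_antisymm
  · rw [xiF_def]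
    apply Ordinal.iSup_le
    rintro ⟨j, hj⟩
    rw [Set.mem_Iio, Order.lt_succ_iff] at hj
    rcases eq_or_lt_of_le hj with rfl | hj'
    · exact le_rfl
    · exact (le_xiF u hj').trans (hu i _).le
  · exact le_xiF u (lt_succ i)

theorem xiF_le_sSup_of_cofinal {i : Ordinal} {T : Set Ordinal} (hT1 : ∀ t ∈ T, t < i)
    (hT2 : ∀ j < i, ∃ t ∈ T, j < t) :
    xiF u i ≤ sSup (xiF u '' T) := by
  have hsmT : Small.{0} T := by
    haveI inst : Small.{0} (Set.Iio i) := Ordinal.small_Iio i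
    exact small_subset (s := Set.Iio i) (fun x hx => hT1 x hx)
  have hbdd : BddAbove (xiF u '' T) := Ordinal.bddAbove_iff_small.2 (small_image _ _)
  rw [xiF_def]
  apply Ordinal.iSup_le
  rintro ⟨j, hj⟩
  obtain ⟨t, ht, hjt⟩ := hT2 j hj
  exact (le_xiF u hjt).trans (le_csSup hbdd (mem_image_of_mem _ ht))

end


section Card
variable {κ : Cardinal.{0}} (hreg : κ.IsRegular)

theorem isRegular_lift (hreg : κ.IsRegular) : (Cardinal.lift.{1} κ).IsRegular := by
  constructor
  · exact Cardinal.aleph0_le_lift.2 hreg.1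
  · rw [← Cardinal.lift_ord, ← Ordinal.lift_cof, hreg.cof_eq]

theorem mk_lt_of_bounded {S : Set Ordinal} {β : Ordinal} (hβ : β < κ.ord)
    (hS : ∀ s ∈ S, s < β) : #S < Cardinal.lift.{1} κ := by
  calc #S ≤ #(Set.Iio β) := mk_le_mk_of_subset hS
  _ = Cardinal.lift.{1} β.card := Ordinal.mk_Iio_ordinal β
  _ < Cardinal.lift.{1} κ := Cardinal.lift_lt.2 (Cardinal.lt_ord.1 hβ)

include hreg

theorem exists_bound_of_mk_lt {S : Set Ordinal} (hS : ∀ s ∈ S, s < κ.ord)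
    (h : #S < Cardinal.lift.{1} κ) : ∃ β < κ.ord, ∀ s ∈ S, s < β := by
  haveI hsmT : Small.{0} S := by
    haveI inst : Small.{0} (Set.Iio κ.ord) := Ordinal.small_Iio κ.ord
    exact small_subset (s := Set.Iio κ.ord) (fun x hx => hS x hx)
  set g : Shrink.{0} S → Ordinal := fun x => ((equivShrink S).symm x : Ordinal) with hg
  have hcard : #(Shrink.{0} S) < κ := by
    have h2 := Cardinal.lift_mk_shrink'' (↥S)
    refine Cardinal.lift_lt.1 ?_
    rw [h2]
    exact h
  have hsup : (⨆ x, g x) < κ.ord := by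
    apply Ordinal.iSup_lt_ord _ _
    · rwa [hreg.cof_eq]
    · intro x
      exact hS _ (((equivShrink S).symm x)).2
  refine ⟨(⨆ x, g x) + 1, ?_, ?_⟩
  · rw [Ordinal.add_one_eq_succ]
    exact (Cardinal.isSuccLimit_ord hreg.1).succ_lt hsup
  · intro s hs
    have : s ≤ ⨆ x, g x := by
      have := Ordinal.le_iSup g (equivShrink S ⟨s, hs⟩)
      simpa [hg] using this
    exact this.trans_lt (lt_add_one _)

theorem mk_eq_of_unbounded {S : Set Ordinal} (hS : ∀ s ∈ S, s < κ.ord)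
    (h : ∀ x < κ.ord, ∃ s ∈ S, x < s) : #S = Cardinal.lift.{1} κ := by
  apply le_antisymm
  · calc #S ≤ #(Set.Iio κ.ord) := mk_le_mk_of_subset hS
    _ = Cardinal.lift.{1} (κ.ord).card := Ordinal.mk_Iio_ordinal κ.ord
    _ = Cardinal.lift.{1} κ := by rw [Cardinal.card_ord]
  · by_contra hcon
    rw [not_le] at hcon
    obtain ⟨β, hβ, hbd⟩ := exists_bound_of_mk_lt hreg hS hcon
    obtain ⟨s, hs, hβs⟩ := h β hβ
    exact absurd (hbd s hs) (not_lt.2 hβs.le)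

theorem unbounded_of_mk_eq {S : Set Ordinal} (hS : ∀ s ∈ S, s < κ.ord)
    (h : #S = Cardinal.lift.{1} κ) : ∀ x < κ.ord, ∃ s ∈ S, x < s := by
  intro x hx
  by_contra hcon
  push_neg at hcon
  have : #S < Cardinal.lift.{1} κ := by
    apply mk_lt_of_bounded ((Cardinal.isSuccLimit_ord hreg.1).succ_lt hx)
    intro s hs
    exact (hcon s hs).trans_lt (lt_succ x)
  rw [h] at this
  exact absurd this (lt_irrefl _)

theorem mk_biUnion_lt {i : Ordinal} (hi : i < κ.ord) {V : Ordinal → Set Ordinal}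
    (hV : ∀ j < i, #(V j) < Cardinal.lift.{1} κ) :
    #(⋃ j ∈ Set.Iio i, V j) < Cardinal.lift.{1} κ := by
  rw [Set.biUnion_eq_iUnion]
  have hlk : ℵ₀ ≤ Cardinal.lift.{1} κ := Cardinal.aleph0_le_lift.2 hreg.1
  have hmki : #(Set.Iio i) < Cardinal.lift.{1} κ := by
    rw [Ordinal.mk_Iio_ordinal]
    exact Cardinal.lift_lt.2 (Cardinal.lt_ord.1 hi)
  apply lt_of_le_of_lt (Cardinal.mk_iUnion_le _)
  apply Cardinal.mul_lt_of_lt hlk hmki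
  apply Cardinal.iSup_lt_of_isRegular (isRegular_lift hreg) hmki
  rintro ⟨j, hj⟩
  exact hV j hj

theorem sup_lt_K {i : Ordinal} (hi : i < κ.ord) {g : Set.Iio i → Ordinal}
    (hh : ∀ j, g j < κ.ord) : (⨆ j, g j) < κ.ord := by
  have hIm : ∀ s ∈ Set.range g, s < κ.ord := by
    rintro s ⟨j, rfl⟩
    exact hh j
  have hmk : #(Set.range g) < Cardinal.lift.{1} κ := by
    apply lt_of_le_of_lt Cardinal.mk_range_le
    rw [Ordinal.mk_Iio_ordinal]
    exact Cardinal.lift_lt.2 (Cardinal.lt_ord.1 hi)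
  obtain ⟨β, hβ, hbd⟩ := exists_bound_of_mk_lt hreg hIm hmk
  refine lt_of_le_of_lt (Ordinal.iSup_le ?_) hβ
  intro j
  exact (hbd _ (Set.mem_range_self j)).le


theorem nat_sup_lt (hunc : ℵ₀ < κ) {r : ℕ → Ordinal} (hr : ∀ n, r n < κ.ord) :
    (⨆ n, r n) < κ.ord := by
  apply Ordinal.iSup_lt_ord _ hr
  rw [hreg.cof_eq]
  simpa using hunc

/-- there is a partition of `Iio κ.ord` into `κ` pieces of size `κ`. -/
theorem exists_partition :
    ∃ P : Ordinal → Set Ordinal,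
      (∀ l, ∀ α ∈ P l, α < κ.ord) ∧
      (∀ l, ¬ l < κ.ord → P l = ∅) ∧
      (∀ l l', l ≠ l' → P l ∩ P l' = ∅) ∧
      (∀ l < κ.ord, #(P l) = Cardinal.lift.{1} κ) := by
  have hmk : #(Set.Iio κ.ord × Set.Iio κ.ord) = #(Set.Iio κ.ord) := by
    rw [Cardinal.mk_prod, Ordinal.mk_Iio_ordinal, Cardinal.card_ord]
    simp only [Cardinal.lift_id]
    exact Cardinal.mul_eq_self (Cardinal.aleph0_le_lift.2 hreg.1)
  obtain ⟨e⟩ := Cardinal.eq.1 hmk.symm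
  refine ⟨fun l => {α | ∃ h : α < κ.ord, ((e ⟨α, h⟩).1 : Ordinal) = l}, ?_, ?_, ?_, ?_⟩
  · rintro l α ⟨h, -⟩
    exact h
  · intro l hl
    ext α
    simp only [mem_setOf_eq, mem_empty_iff_false, iff_false, not_exists]
    intro h he
    exact hl (he ▸ (e ⟨α, h⟩).1.2)
  · intro l l' hll
    ext α
    simp only [mem_inter_iff, mem_setOf_eq, mem_empty_iff_false, iff_false, not_and]
    rintro ⟨h, h1⟩ ⟨h', h2⟩
    exact hll (h1 ▸ h2 ▸ rfl)
  · intro l hl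
    apply le_antisymm
    · calc #({α | ∃ h : α < κ.ord, ((e ⟨α, h⟩).1 : Ordinal) = l})
          ≤ #(Set.Iio κ.ord) := mk_le_mk_of_subset (by rintro α ⟨h, -⟩; exact h)
      _ = Cardinal.lift.{1} κ := by rw [Ordinal.mk_Iio_ordinal, Cardinal.card_ord]
    · have : Cardinal.lift.{1} κ = #(Set.Iio κ.ord) := by
        rw [Ordinal.mk_Iio_ordinal, Cardinal.card_ord]
      rw [this]
      have hmem : ∀ y : Set.Iio κ.ord, (e.symm (⟨l, hl⟩, y) : Ordinal) ∈
          {α | ∃ h : α < κ.ord, ((e ⟨α, h⟩).1 : Ordinal) = l} := by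
        intro y
        refine ⟨(e.symm (⟨l, hl⟩, y)).2, ?_⟩
        have h0 : (⟨(e.symm (⟨l, hl⟩, y) : Ordinal), (e.symm (⟨l, hl⟩, y)).2⟩ :
            Set.Iio κ.ord) = e.symm (⟨l, hl⟩, y) := rfl
        rw [h0, Equiv.apply_symm_apply]
      apply Cardinal.mk_le_of_injective
        (f := fun y : Set.Iio κ.ord => (⟨(e.symm (⟨l, hl⟩, y) : Ordinal), hmem y⟩ :
          {α | ∃ h : α < κ.ord, ((e ⟨α, h⟩).1 : Ordinal) = l}))
      intro y y' hyy
      rw [Subtype.mk.injEq] at hyy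
      have h2 : e.symm (⟨l, hl⟩, y) = e.symm (⟨l, hl⟩, y') := Subtype.ext hyy
      have := e.symm.injective h2
      exact (Prod.ext_iff.1 this).2

/-- choice of a surjection from `Iio κ.ord` onto `Iio δ`. -/
theorem exists_surj (δ : Ordinal) :
    ∃ s : Ordinal → Ordinal, δ.card ≤ κ → 0 < δ →
      ((∀ j, s j < δ) ∧ ∀ γ < δ, ∃ j < κ.ord, s j = γ) := by
  classical
  by_cases hδ : δ.card ≤ κ ∧ 0 < δ
  · obtain ⟨h1, h2⟩ := hδ
    have hle : #(Set.Iio δ) ≤ #(Set.Iio κ.ord) := by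
      rw [Ordinal.mk_Iio_ordinal, Ordinal.mk_Iio_ordinal, Cardinal.card_ord]
      exact Cardinal.lift_le.2 h1
    obtain ⟨g⟩ := Cardinal.le_def _ _ |>.1 hle
    set s : Ordinal → Ordinal := fun j =>
      if h : ∃ x : Set.Iio δ, ((g x : Ordinal) = j) then (h.choose : Ordinal) else 0 with hs
    refine ⟨s, fun _ _ => ⟨?_, ?_⟩⟩
    · intro j
      rw [hs]
      dsimp only
      split
      · next h => exact h.choose.2
      · exact h2
    · intro γ hγ
      refine ⟨(g ⟨γ, hγ⟩ : Ordinal), (g ⟨γ, hγ⟩).2, ?_⟩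
      have hex : ∃ x : Set.Iio δ, ((g x : Ordinal) = (g ⟨γ, hγ⟩ : Ordinal)) := ⟨⟨γ, hγ⟩, rfl⟩
      rw [hs]
      dsimp only
      rw [dif_pos hex]
      have h3 : g hex.choose = g ⟨γ, hγ⟩ := Subtype.ext hex.choose_spec
      have := g.injective h3
      rw [this]
  · exact ⟨fun _ => 0, fun h1 h2 => absurd ⟨h1, h2⟩ hδ⟩

end Card


/-- The sets to avoid at step `i` of a stage: previous partition classes and
previously constructed family members (via the enumeration `En`). -/
def avoidF (P : Ordinal.{0} → Set Ordinal) (prev : Ordinal → Set Ordinal)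
    (En : Ordinal → Ordinal) (i : Ordinal) : Set Ordinal :=
  ⋃ j ∈ Set.Iio i, (P j ∪ prev (En j))

/-- step function within a stage. -/
noncomputable def stpF (P : Ordinal.{0} → Set Ordinal) (prev : Ordinal → Set Ordinal)
    (En : Ordinal → Ordinal) (fd : Ordinal → Ordinal) (i x : Ordinal) : Ordinal :=
  max (x + 1) (sInf ((P i ∩ Set.Ioi (max x (fd x))) \ avoidF P prev En i) + 1)

theorem lt_stpF (P : Ordinal.{0} → Set Ordinal) (prev : Ordinal → Set Ordinal)
    (En : Ordinal → Ordinal) (fd : Ordinal → Ordinal) (i x : Ordinal) :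
    x < stpF P prev En fd i x :=
  (lt_add_one x).trans_le (le_max_left _ _)

/-- the `δ`-th member of the almost disjoint family. -/
noncomputable def AsetF (P : Ordinal.{0} → Set Ordinal)
    (E : Ordinal.{0} → Ordinal.{0} → Ordinal.{0})
    (f : Ordinal.{0} → Ordinal.{0} → Ordinal.{0}) (K : Ordinal.{0}) (δ : Ordinal.{0}) :
    Set Ordinal :=
  ⋃ i ∈ Set.Iio K,
    (Set.Ico (xiF (stpF P (fun γ => if h : γ < δ then AsetF P E f K γ else ∅) (E δ) (f δ)) i)
        (xiF (stpF P (fun γ => if h : γ < δ then AsetF P E f K γ else ∅) (E δ) (f δ)) (i + 1)) \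
      avoidF P (fun γ => if h : γ < δ then AsetF P E f K γ else ∅) (E δ) i)
termination_by δ
decreasing_by all_goals exact h

theorem AsetF_def (P : Ordinal.{0} → Set Ordinal)
    (E : Ordinal.{0} → Ordinal.{0} → Ordinal.{0})
    (f : Ordinal.{0} → Ordinal.{0} → Ordinal.{0}) (K : Ordinal.{0}) (δ : Ordinal.{0}) :
    AsetF P E f K δ = ⋃ i ∈ Set.Iio K,
      (Set.Ico (xiF (stpF P (fun γ => if h : γ < δ then AsetF P E f K γ else ∅) (E δ) (f δ)) i)
          (xiF (stpF P (fun γ => if h : γ < δ then AsetF P E f K γ else ∅) (E δ) (f δ)) (i + 1)) \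
        avoidF P (fun γ => if h : γ < δ then AsetF P E f K γ else ∅) (E δ) i) := by
  rw [AsetF]


noncomputable def prevD (P : Ordinal.{0} → Set Ordinal) (E : Ordinal.{0} → Ordinal → Ordinal)
    (f : Ordinal.{0} → Ordinal → Ordinal) (K δ : Ordinal) : Ordinal → Set Ordinal :=
  fun γ => if h : γ < δ then AsetF P E f K γ else ∅

noncomputable def xiD (P : Ordinal.{0} → Set Ordinal) (E : Ordinal.{0} → Ordinal → Ordinal)
    (f : Ordinal.{0} → Ordinal → Ordinal) (K δ : Ordinal) : Ordinal → Ordinal :=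
  xiF (stpF P (prevD P E f K δ) (E δ) (f δ))

noncomputable def avD (P : Ordinal.{0} → Set Ordinal) (E : Ordinal.{0} → Ordinal → Ordinal)
    (f : Ordinal.{0} → Ordinal → Ordinal) (K δ i : Ordinal) : Set Ordinal :=
  avoidF P (prevD P E f K δ) (E δ) i

noncomputable def pSetD (P : Ordinal.{0} → Set Ordinal) (E : Ordinal.{0} → Ordinal → Ordinal)
    (f : Ordinal.{0} → Ordinal → Ordinal) (K δ i : Ordinal) : Set Ordinal :=
  (P i ∩ Set.Ioi (max (xiD P E f K δ i) (f δ (xiD P E f K δ i)))) \ avD P E f K δ i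

noncomputable def pDD (P : Ordinal.{0} → Set Ordinal) (E : Ordinal.{0} → Ordinal → Ordinal)
    (f : Ordinal.{0} → Ordinal → Ordinal) (K δ i : Ordinal) : Ordinal :=
  sInf (pSetD P E f K δ i)

theorem Aset_eq (P : Ordinal.{0} → Set Ordinal) (E : Ordinal.{0} → Ordinal → Ordinal)
    (f : Ordinal.{0} → Ordinal → Ordinal) (K δ : Ordinal) :
    AsetF P E f K δ = ⋃ i ∈ Set.Iio K,
      (Set.Ico (xiD P E f K δ i) (xiD P E f K δ (i + 1)) \ avD P E f K δ i) := by
  rw [AsetF_def]; rfl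

theorem stp_xi_eq (P : Ordinal.{0} → Set Ordinal) (E : Ordinal.{0} → Ordinal → Ordinal)
    (f : Ordinal.{0} → Ordinal → Ordinal) (K δ i : Ordinal) :
    stpF P (prevD P E f K δ) (E δ) (f δ) i (xiD P E f K δ i) =
      max (xiD P E f K δ i + 1) (pDD P E f K δ i + 1) := rfl

theorem avD_eq (P : Ordinal.{0} → Set Ordinal) (E : Ordinal.{0} → Ordinal → Ordinal)
    (f : Ordinal.{0} → Ordinal → Ordinal) (K δ i : Ordinal) :
    avD P E f K δ i = ⋃ j ∈ Set.Iio i, (P j ∪ prevD P E f K δ (E δ j)) := rfl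

theorem xiD_succ (P : Ordinal.{0} → Set Ordinal) (E : Ordinal.{0} → Ordinal → Ordinal)
    (f : Ordinal.{0} → Ordinal → Ordinal) (K δ i : Ordinal) :
    xiD P E f K δ (i + 1) = max (xiD P E f K δ i + 1) (pDD P E f K δ i + 1) := by
  rw [← stp_xi_eq]
  exact xiF_succ (fun j x => lt_stpF _ _ _ _ j x) i


theorem stage_core {κ : Cardinal.{0}} (hreg : κ.IsRegular)
    (P : Ordinal.{0} → Set Ordinal) (E : Ordinal.{0} → Ordinal → Ordinal)
    (f : Ordinal.{0} → Ordinal → Ordinal)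
    (hP1 : ∀ l, ∀ α ∈ P l, α < κ.ord)
    (hP2 : ∀ l, ¬ l < κ.ord → P l = ∅)
    (hP3 : ∀ l l', l ≠ l' → P l ∩ P l' = ∅)
    (hP4 : ∀ l < κ.ord, #(P l) = Cardinal.lift.{1} κ)
    (hE : ∀ δ, δ.card ≤ κ → 0 < δ → (∀ j, E δ j < δ) ∧ ∀ γ < δ, ∃ j < κ.ord, E δ j = γ)
    {δ : Ordinal} (hδ : δ < (Order.succ κ).ord)
    (hfδ : ∀ x < κ.ord, f δ x < κ.ord)
    (ih : ∀ γ < δ, (∀ α ∈ AsetF P E f κ.ord γ, α < κ.ord) ∧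
      (∀ l, #(AsetF P E f κ.ord γ ∩ P l : Set Ordinal) < Cardinal.lift.{1} κ)) :
    (∀ α ∈ AsetF P E f κ.ord δ, α < κ.ord) ∧
    #(AsetF P E f κ.ord δ) = Cardinal.lift.{1} κ ∧
    (∀ l, #(AsetF P E f κ.ord δ ∩ P l : Set Ordinal) < Cardinal.lift.{1} κ) ∧
    (∀ γ < δ, #(AsetF P E f κ.ord δ ∩ AsetF P E f κ.ord γ : Set Ordinal) < Cardinal.lift.{1} κ) ∧
    (∀ i < κ.ord, xiD P E f κ.ord δ i < κ.ord) ∧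
    (∀ i < κ.ord,
      max (xiD P E f κ.ord δ i) (f δ (xiD P E f κ.ord δ i)) < xiD P E f κ.ord δ (i + 1)) := by
  have hKlim : IsSuccLimit (κ.ord) := Cardinal.isSuccLimit_ord hreg.1
  have hlk0 : (0 : Cardinal.{1}) < Cardinal.lift.{1} κ :=
    lt_of_lt_of_le aleph0_pos (Cardinal.aleph0_le_lift.2 hreg.1)
  have hu : ∀ j x, x < stpF P (prevD P E f κ.ord δ) (E δ) (f δ) j x :=
    fun j x => lt_stpF _ _ _ _ j x
  have hprevP : ∀ γ l, #(P l ∩ prevD P E f κ.ord δ γ : Set Ordinal) < Cardinal.lift.{1} κ := by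
    intro γ l
    by_cases h : γ < δ
    · rw [Set.inter_comm,
        show prevD P E f κ.ord δ γ = AsetF P E f κ.ord γ from by unfold prevD; rw [dif_pos h]]
      exact (ih γ h).2 l
    · rw [show prevD P E f κ.ord δ γ = ∅ from by unfold prevD; rw [dif_neg h]]
      simpa using hlk0
  have hPav : ∀ i < κ.ord, #(P i ∩ avD P E f κ.ord δ i : Set Ordinal) < Cardinal.lift.{1} κ := by
    intro i hi
    rw [avD_eq]
    have hsub : P i ∩ (⋃ j ∈ Set.Iio i, (P j ∪ prevD P E f κ.ord δ (E δ j))) ⊆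
        ⋃ j ∈ Set.Iio i, (P i ∩ prevD P E f κ.ord δ (E δ j)) := by
      rintro α ⟨hPi, hαu⟩
      simp only [mem_iUnion, exists_prop] at hαu ⊢
      obtain ⟨j, hj, hα⟩ := hαu
      rw [Set.mem_Iio] at hj
      refine ⟨j, hj, hPi, ?_⟩
      rcases hα with h | h
      · exfalso
        have hmem : α ∈ P i ∩ P j := ⟨hPi, h⟩
        rw [hP3 i j (ne_of_gt hj)] at hmem
        exact hmem
      · exact h
    refine lt_of_le_of_lt (mk_le_mk_of_subset hsub) (mk_biUnion_lt hreg hi ?_)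
    intro j _
    exact hprevP (E δ j) i
  have hPdiff : ∀ i < κ.ord, ∀ x < κ.ord,
      ∃ s, (s ∈ P i ∧ s ∉ avD P E f κ.ord δ i) ∧ x < s := by
    intro i hi x hx
    by_contra hcon
    push_neg at hcon
    have hbd : #(P i \ avD P E f κ.ord δ i : Set Ordinal) < Cardinal.lift.{1} κ := by
      apply mk_lt_of_bounded (hKlim.succ_lt hx)
      rintro s ⟨h1, h2⟩
      exact Order.lt_succ_iff.2 (hcon s ⟨h1, h2⟩)
    have hsplit : Cardinal.lift.{1} κ ≤
        #(P i ∩ avD P E f κ.ord δ i : Set Ordinal) + #(P i \ avD P E f κ.ord δ i : Set Ordinal) := by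
      rw [← hP4 i hi]
      calc #(P i) = #((P i ∩ avD P E f κ.ord δ i) ∪ (P i \ avD P E f κ.ord δ i) : Set Ordinal) := by
            rw [Set.inter_union_diff]
      _ ≤ _ := Cardinal.mk_union_le _ _
    have : Cardinal.lift.{1} κ < Cardinal.lift.{1} κ := lt_of_le_of_lt hsplit
      (Cardinal.add_lt_of_lt (Cardinal.aleph0_le_lift.2 hreg.1) (hPav i hi) hbd)
    exact absurd this (lt_irrefl _)
  have hxiK : ∀ i, i < κ.ord → xiD P E f κ.ord δ i < κ.ord := by
    intro i
    induction i using Ordinal.induction with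
    | h i ihx =>
      intro hiK
      unfold xiD
      rw [xiF_def]
      apply sup_lt_K hreg hiK
      rintro ⟨j, hj⟩
      rw [Set.mem_Iio] at hj
      have hjK : j < κ.ord := hj.trans hiK
      have hxj : xiD P E f κ.ord δ j < κ.ord := ihx j hj hjK
      show stpF P (prevD P E f κ.ord δ) (E δ) (f δ) j (xiD P E f κ.ord δ j) < κ.ord
      rw [stp_xi_eq]
      apply max_lt
      · rw [Ordinal.add_one_eq_succ]
        exact hKlim.succ_lt hxj
      · obtain ⟨s, hs1, hs2⟩ := hPdiff j hjK
          (max (xiD P E f κ.ord δ j) (f δ (xiD P E f κ.ord δ j))) (max_lt hxj (hfδ _ hxj))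
        have hne : (pSetD P E f κ.ord δ j).Nonempty := ⟨s, ⟨hs1.1, hs2⟩, hs1.2⟩
        have hmem := csInf_mem hne
        have hlt : pDD P E f κ.ord δ j < κ.ord := hP1 j _ hmem.1.1
        rw [Ordinal.add_one_eq_succ]
        exact hKlim.succ_lt hlt
  have hpne : ∀ i < κ.ord, (pSetD P E f κ.ord δ i).Nonempty := by
    intro i hi
    have hxi := hxiK i hi
    obtain ⟨s, hs1, hs2⟩ := hPdiff i hi _ (max_lt hxi (hfδ _ hxi))
    exact ⟨s, ⟨hs1.1, hs2⟩, hs1.2⟩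
  have hpmem : ∀ i < κ.ord, pDD P E f κ.ord δ i ∈ pSetD P E f κ.ord δ i :=
    fun i hi => csInf_mem (hpne i hi)
  have hpgt : ∀ i < κ.ord,
      max (xiD P E f κ.ord δ i) (f δ (xiD P E f κ.ord δ i)) < pDD P E f κ.ord δ i :=
    fun i hi => (hpmem i hi).1.2
  have hxisuccK : ∀ i < κ.ord, xiD P E f κ.ord δ (i + 1) < κ.ord := by
    intro i hi
    have h1 : i + 1 < κ.ord := by rw [Ordinal.add_one_eq_succ]; exact hKlim.succ_lt hi
    exact hxiK _ h1
  have hS6 : ∀ i < κ.ord,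
      max (xiD P E f κ.ord δ i) (f δ (xiD P E f κ.ord δ i)) < xiD P E f κ.ord δ (i + 1) := by
    intro i hi
    rw [xiD_succ]
    exact lt_of_lt_of_le ((hpgt i hi).trans (lt_add_one _)) (le_max_right _ _)
  have hpblock : ∀ i < κ.ord,
      pDD P E f κ.ord δ i ∈
        Set.Ico (xiD P E f κ.ord δ i) (xiD P E f κ.ord δ (i + 1)) \ avD P E f κ.ord δ i := by
    intro i hi
    refine ⟨⟨?_, ?_⟩, (hpmem i hi).2⟩
    · exact le_of_lt (lt_of_le_of_lt (le_max_left _ _) (hpgt i hi))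
    · rw [xiD_succ]
      exact lt_of_lt_of_le (lt_add_one _) (le_max_right _ _)
  have hpinA : ∀ i < κ.ord, pDD P E f κ.ord δ i ∈ AsetF P E f κ.ord δ := by
    intro i hi
    rw [Aset_eq]
    exact Set.mem_biUnion (Set.mem_Iio.2 hi) (hpblock i hi)
  have hB1 : ∀ α ∈ AsetF P E f κ.ord δ, α < κ.ord := by
    intro α hα
    rw [Aset_eq] at hα
    simp only [mem_iUnion, exists_prop] at hα
    obtain ⟨i, hi, hα⟩ := hα
    rw [Set.mem_Iio] at hi
    exact (hα.1.2).trans (hxisuccK i hi)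
  have hB2 : #(AsetF P E f κ.ord δ) = Cardinal.lift.{1} κ := by
    apply mk_eq_of_unbounded hreg hB1
    intro x hx
    have hx1 : x + 1 < κ.ord := by rw [Ordinal.add_one_eq_succ]; exact hKlim.succ_lt hx
    refine ⟨pDD P E f κ.ord δ (x + 1), hpinA _ hx1, ?_⟩
    have h1 : x + 1 ≤ xiD P E f κ.ord δ (x + 1) := le_self_xiF hu (x + 1)
    calc x < x + 1 := lt_add_one x
    _ ≤ xiD P E f κ.ord δ (x + 1) := h1
    _ < pDD P E f κ.ord δ (x + 1) := lt_of_le_of_lt (le_max_left _ _) (hpgt _ hx1)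
  have hbound : ∀ j < κ.ord, ∀ α ∈ AsetF P E f κ.ord δ,
      α ∈ P j ∪ prevD P E f κ.ord δ (E δ j) → α < xiD P E f κ.ord δ (j + 1) := by
    intro j hj α hα hmem
    rw [Aset_eq] at hα
    simp only [mem_iUnion, exists_prop] at hα
    obtain ⟨i, hi, hIco, hnav⟩ := hα
    rcases le_or_gt i j with hij | hij
    · exact lt_of_lt_of_le hIco.2 (xiF_mono hu (add_le_add_left hij 1))
    · exfalso
      apply hnav
      rw [avD_eq]
      exact Set.mem_biUnion (Set.mem_Iio.2 hij) hmem
  have hB3 : ∀ l, #(AsetF P E f κ.ord δ ∩ P l : Set Ordinal) < Cardinal.lift.{1} κ := by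
    intro l
    by_cases hl : l < κ.ord
    · apply mk_lt_of_bounded (hxisuccK l hl)
      rintro α ⟨hαA, hαP⟩
      exact hbound l hl α hαA (Or.inl hαP)
    · rw [hP2 l hl]
      simpa using hlk0
  have hB4 : ∀ γ < δ,
      #(AsetF P E f κ.ord δ ∩ AsetF P E f κ.ord γ : Set Ordinal) < Cardinal.lift.{1} κ := by
    intro γ hγ
    have hδpos : 0 < δ := (zero_le (a := γ)).trans_lt hγ
    have hδcard : δ.card ≤ κ := Order.lt_succ_iff.1 (Cardinal.lt_ord.1 hδ)
    obtain ⟨j, hjK, hEj⟩ := (hE δ hδcard hδpos).2 γ hγ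
    apply mk_lt_of_bounded (hxisuccK j hjK)
    rintro α ⟨hαA, hαγ⟩
    apply hbound j hjK α hαA
    right
    unfold prevD
    rw [hEj, dif_pos hγ]
    exact hαγ
  exact ⟨hB1, hB2, hB3, hB4, fun i hi => hxiK i hi, hS6⟩

theorem stage_all {κ : Cardinal.{0}} (hreg : κ.IsRegular)
    (P : Ordinal.{0} → Set Ordinal) (E : Ordinal.{0} → Ordinal → Ordinal)
    (f : Ordinal.{0} → Ordinal → Ordinal)
    (hP1 : ∀ l, ∀ α ∈ P l, α < κ.ord)
    (hP2 : ∀ l, ¬ l < κ.ord → P l = ∅)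
    (hP3 : ∀ l l', l ≠ l' → P l ∩ P l' = ∅)
    (hP4 : ∀ l < κ.ord, #(P l) = Cardinal.lift.{1} κ)
    (hE : ∀ δ, δ.card ≤ κ → 0 < δ → (∀ j, E δ j < δ) ∧ ∀ γ < δ, ∃ j < κ.ord, E δ j = γ)
    (hf : ∀ δ < (Order.succ κ).ord, ∀ x < κ.ord, f δ x < κ.ord) :
    ∀ δ < (Order.succ κ).ord,
    (∀ α ∈ AsetF P E f κ.ord δ, α < κ.ord) ∧
    #(AsetF P E f κ.ord δ) = Cardinal.lift.{1} κ ∧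
    (∀ l, #(AsetF P E f κ.ord δ ∩ P l : Set Ordinal) < Cardinal.lift.{1} κ) ∧
    (∀ γ < δ, #(AsetF P E f κ.ord δ ∩ AsetF P E f κ.ord γ : Set Ordinal) < Cardinal.lift.{1} κ) ∧
    (∀ i < κ.ord, xiD P E f κ.ord δ i < κ.ord) ∧
    (∀ i < κ.ord,
      max (xiD P E f κ.ord δ i) (f δ (xiD P E f κ.ord δ i)) < xiD P E f κ.ord δ (i + 1)) := by
  intro δ
  induction δ using Ordinal.induction with
  | h δ ihh =>
    intro hδ
    exact stage_core hreg P E f hP1 hP2 hP3 hP4 hE hδ (hf δ hδ)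
      (fun γ hγ => ⟨(ihh γ hγ (hγ.trans hδ)).1, (ihh γ hγ (hγ.trans hδ)).2.2.1⟩)

theorem catch_lemma {κ : Cardinal.{0}} (hreg : κ.IsRegular) (hunc : ℵ₀ < κ)
    (P : Ordinal.{0} → Set Ordinal) (E : Ordinal.{0} → Ordinal → Ordinal)
    (f : Ordinal.{0} → Ordinal → Ordinal) {δ : Ordinal}
    (hxiK : ∀ i < κ.ord, xiD P E f κ.ord δ i < κ.ord)
    (hS6 : ∀ i < κ.ord,
      max (xiD P E f κ.ord δ i) (f δ (xiD P E f κ.ord δ i)) < xiD P E f κ.ord δ (i + 1))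
    {B : Set Ordinal} (hBsub : ∀ b ∈ B, b < κ.ord)
    (hBunb : ∀ x < κ.ord, ∃ b ∈ B, x < b)
    (hVsmall : ∀ j < κ.ord,
      #(B ∩ (P j ∪ prevD P E f κ.ord δ (E δ j)) : Set Ordinal) < Cardinal.lift.{1} κ)
    (hstat : IsStationaryIn {α | α < κ.ord ∧ succIn B α < f δ α} κ.ord) :
    ∀ y < κ.ord, ∃ b, b ∈ AsetF P E f κ.ord δ ∧ b ∈ B ∧ y < b := by
  intro y hy
  have hKlim : IsSuccLimit (κ.ord) := Cardinal.isSuccLimit_ord hreg.1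
  have hu : ∀ j x, x < stpF P (prevD P E f κ.ord δ) (E δ) (f δ) j x :=
    fun j x => lt_stpF _ _ _ _ j x
  have hVchoice : ∀ j, ∃ β, j < κ.ord → (β < κ.ord ∧
      ∀ s ∈ B ∩ (P j ∪ prevD P E f κ.ord δ (E δ j)), s < β) := by
    intro j
    by_cases hj : j < κ.ord
    · obtain ⟨β, hβ, hbd⟩ := exists_bound_of_mk_lt hreg
        (S := B ∩ (P j ∪ prevD P E f κ.ord δ (E δ j))) (fun s hs => hBsub s hs.1) (hVsmall j hj)
      exact ⟨β, fun _ => ⟨hβ, hbd⟩⟩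
    · exact ⟨0, fun h => absurd h hj⟩
  choose h hh using hVchoice
  set C : Set Ordinal := {x | x < κ.ord ∧ y < x ∧
    ∃ i < κ.ord, x = xiD P E f κ.ord δ i ∧ ∀ j < i, h j < x} with hCdef
  have hclub : IsClubIn C κ.ord := by
    refine ⟨fun x hx => hx.1, ?_, ?_⟩
    · -- unbounded
      intro z hz
      set r : ℕ → Ordinal := fun n =>
        n.rec ((max y z) + 1) (fun _ p => ((⨆ j : Set.Iio p, h j.1) ⊔ p) + 1) with hrdef
      have hr0 : r 0 = (max y z) + 1 := rfl
      have hrsucc : ∀ n, r (n + 1) = ((⨆ j : Set.Iio (r n), h j.1) ⊔ (r n)) + 1 := fun n => rfl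
      have hrK : ∀ n, r n < κ.ord := by
        intro n
        induction n with
        | zero =>
          rw [hr0, Ordinal.add_one_eq_succ]
          exact hKlim.succ_lt (max_lt hy hz)
        | succ n ihn =>
          rw [hrsucc, Ordinal.add_one_eq_succ]
          apply hKlim.succ_lt
          apply max_lt _ ihn
          apply sup_lt_K hreg ihn
          rintro ⟨j, hj⟩
          rw [Set.mem_Iio] at hj
          exact (hh j (hj.trans ihn)).1
      have hiωK : (⨆ n, r n) < κ.ord := nat_sup_lt hreg hunc hrK
      set iω := ⨆ n, r n with hiω
      have hr_le : ∀ n, r n ≤ iω := fun n => Ordinal.le_iSup r n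
      have hself : iω ≤ xiD P E f κ.ord δ iω := le_self_xiF hu iω
      have hyx : y < xiD P E f κ.ord δ iω := by
        calc y < (max y z) + 1 := lt_of_le_of_lt (le_max_left _ _) (lt_add_one _)
        _ = r 0 := hr0.symm
        _ ≤ iω := hr_le 0
        _ ≤ _ := hself
      refine ⟨xiD P E f κ.ord δ iω, ⟨hxiK _ hiωK, hyx, iω, hiωK, rfl, ?_⟩, ?_⟩
      · intro j hj
        have hex : ∃ n, j < r n := by
          by_contra hcon
          push_neg at hcon
          exact absurd hj (not_lt.2 (Ordinal.iSup_le fun n => hcon n))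
        obtain ⟨n, hn⟩ := hex
        have h1 : h j ≤ ⨆ j' : Set.Iio (r n), h j'.1 :=
          Ordinal.le_iSup (fun j' : Set.Iio (r n) => h j'.1) ⟨j, hn⟩
        have h2 : h j < r (n + 1) := by
          rw [hrsucc]
          exact lt_of_le_of_lt (h1.trans (le_max_left _ _)) (lt_add_one _)
        exact lt_of_lt_of_le h2 ((hr_le (n + 1)).trans hself)
      · calc z ≤ max y z := le_max_right _ _
        _ ≤ r 0 := (lt_add_one _).le
        _ ≤ iω := hr_le 0
        _ ≤ _ := hself
    · -- closed
      intro x hxK hx0 hsup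
      set I : Set Ordinal := {i | i < κ.ord ∧ y < xiD P E f κ.ord δ i ∧
        (∀ j < i, h j < xiD P E f κ.ord δ i) ∧ xiD P E f κ.ord δ i < x} with hIdef
      have hCIx : C ∩ Set.Iio x = xiD P E f κ.ord δ '' I := by
        ext c
        constructor
        · rintro ⟨⟨hcK, hyc, i, hiK, rfl, hgood⟩, hcx⟩
          rw [Set.mem_Iio] at hcx
          exact ⟨i, ⟨hiK, hyc, hgood, hcx⟩, rfl⟩
        · rintro ⟨i, ⟨hiK, hyi, hgood, hix⟩, rfl⟩
          exact ⟨⟨hix.trans hxK, hyi, i, hiK, rfl, hgood⟩, hix⟩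
      have hIne : I.Nonempty := by
        by_contra hcon
        rw [Set.not_nonempty_iff_eq_empty] at hcon
        rw [hcon, Set.image_empty] at hCIx
        rw [hCIx, csSup_empty] at hsup
        exact hx0 hsup.symm
      have hnomax : ∀ t ∈ I, ∃ t' ∈ I, t < t' := by
        intro t ht
        by_contra hcon
        push_neg at hcon
        have hbd : sSup (C ∩ Set.Iio x) ≤ xiD P E f κ.ord δ t := by
          rw [hCIx]
          apply csSup_le (hIne.image _)
          rintro c ⟨i, hiI, rfl⟩
          exact xiF_mono hu (hcon i hiI)
        rw [hsup] at hbd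
        exact absurd ht.2.2.2 (not_lt.2 hbd)
      have hIltx : ∀ t ∈ I, t < x := fun t ht => lt_of_le_of_lt (le_self_xiF hu t) ht.2.2.2
      have hbddI : BddAbove I := by
        apply Ordinal.bddAbove_iff_small.2
        haveI inst : Small.{0} (Set.Iio x) := Ordinal.small_Iio x
        exact small_subset (s := Set.Iio x) (fun t ht => hIltx t ht)
      have hTlt : ∀ t ∈ I, t < sSup I := by
        intro t ht
        obtain ⟨t', ht', htt'⟩ := hnomax t ht
        exact lt_of_lt_of_le htt' (le_csSup hbddI ht')
      have hi₀x : sSup I ≤ x := csSup_le hIne (fun t ht => (hIltx t ht).le)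
      have hi₀K : sSup I < κ.ord := lt_of_le_of_lt hi₀x hxK
      have hcof : ∀ j < sSup I, ∃ t ∈ I, j < t := fun j hj => exists_lt_of_lt_csSup hIne hj
      have h1 : xiD P E f κ.ord δ (sSup I) ≤ sSup (xiD P E f κ.ord δ '' I) :=
        xiF_le_sSup_of_cofinal hu hTlt hcof
      have h2 : sSup (xiD P E f κ.ord δ '' I) = x := by rw [← hCIx]; exact hsup
      have h3 : x ≤ xiD P E f κ.ord δ (sSup I) := by
        rw [← h2]
        apply csSup_le (hIne.image _)
        rintro c ⟨t, htI, rfl⟩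
        exact xiF_mono hu (hTlt t htI).le
      have hxi : xiD P E f κ.ord δ (sSup I) = x := le_antisymm (h1.trans h2.le) h3
      obtain ⟨t0, ht0⟩ := hIne
      refine ⟨hxK, ?_, sSup I, hi₀K, hxi.symm, ?_⟩
      · exact lt_of_lt_of_le ht0.2.1 (by rw [← hxi]; exact xiF_mono hu (hTlt t0 ht0).le)
      · intro j hj
        obtain ⟨t, htI, hjt⟩ := hcof j hj
        exact lt_of_lt_of_le (htI.2.2.1 j hjt) (by rw [← hxi]; exact xiF_mono hu (hTlt t htI).le)
  obtain ⟨x, hxS, hxC⟩ := hstat.2 C hclub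
  obtain ⟨hxK, hyx, i, hiK, hxeq, hgood⟩ := hxC
  have hBne : {β | β ∈ B ∧ x < β}.Nonempty := by
    obtain ⟨b, hb, hxb⟩ := hBunb x hxK
    exact ⟨b, hb, hxb⟩
  have hbmem : succIn B x ∈ {β | β ∈ B ∧ x < β} := csInf_mem hBne
  have hbB : succIn B x ∈ B := hbmem.1
  have hxb : x < succIn B x := hbmem.2
  have hbf : succIn B x < f δ x := hxS.2
  refine ⟨succIn B x, ?_, hbB, hyx.trans hxb⟩
  rw [Aset_eq]
  apply Set.mem_biUnion (Set.mem_Iio.2 hiK)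
  refine ⟨⟨?_, ?_⟩, ?_⟩
  · rw [← hxeq]
    exact hxb.le
  · have : succIn B x < f δ (xiD P E f κ.ord δ i) := by rw [← hxeq]; exact hbf
    exact lt_of_lt_of_le (this.trans_le (le_max_right _ _)) (hS6 i hiK).le
  · intro hav
    rw [avD_eq] at hav
    simp only [Set.mem_iUnion, exists_prop] at hav
    obtain ⟨j, hj, hmem⟩ := hav
    rw [Set.mem_Iio] at hj
    have hjK : j < κ.ord := hj.trans hiK
    have hlt : succIn B x < h j := (hh j hjK).2 _ ⟨hbB, hmem⟩
    have hjx : h j < x := hgood j hj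
    exact absurd (hlt.trans hjx) (not_lt.2 hxb.le)

/-- recursion for the diagonalization against a family of size `κ`. -/
noncomputable def diagF (Aen : Ordinal.{0} → Set Ordinal) (i : Ordinal) : Ordinal :=
  sInf ((Aen i \ ⋃ j ∈ Set.Iio i, Aen j) ∩ Set.Ioi (⨆ j : Set.Iio i, diagF Aen j.1))
termination_by i
decreasing_by exact j.2

theorem diagF_def (Aen : Ordinal.{0} → Set Ordinal) (i : Ordinal) :
    diagF Aen i =
      sInf ((Aen i \ ⋃ j ∈ Set.Iio i, Aen j) ∩ Set.Ioi (⨆ j : Set.Iio i, diagF Aen j.1)) := by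
  rw [diagF]

theorem no_mad_of_size_kappa {κ : Cardinal.{0}} (hreg : κ.IsRegular)
    {𝒜 : Set (Set Ordinal)} (hMAD : MADFamily κ 𝒜) : #𝒜 ≠ Cardinal.lift.{1} κ := by
  classical
  intro hmk
  have hKlim : IsSuccLimit (κ.ord) := Cardinal.isSuccLimit_ord hreg.1
  have hIio : #(Set.Iio κ.ord : Set Ordinal) = Cardinal.lift.{1} κ := by
    rw [Ordinal.mk_Iio_ordinal, Cardinal.card_ord]
  obtain ⟨e⟩ := Cardinal.eq.1 (hIio.trans hmk.symm)
  set Aen : Ordinal → Set Ordinal :=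
    fun i => if h : i < κ.ord then (e ⟨i, h⟩ : Set Ordinal) else ∅ with hAen
  have hAval : ∀ i (h : i < κ.ord), Aen i = (e ⟨i, h⟩ : Set Ordinal) := by
    intro i h
    rw [hAen]
    simp only [dif_pos h]
  have hAmem : ∀ i, i < κ.ord → Aen i ∈ 𝒜 := by
    intro i hi
    rw [hAval i hi]
    exact (e ⟨i, hi⟩).2
  have hAinj : ∀ i, i < κ.ord → ∀ j, j < κ.ord → i ≠ j → Aen i ≠ Aen j := by
    intro i hi j hj hij hEq
    rw [hAval i hi, hAval j hj] at hEq
    exact hij (congrArg Subtype.val (e.injective (Subtype.ext hEq)))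
  have hbig : ∀ i, i < κ.ord → IsBig κ (Aen i) := fun i hi => hMAD.1.1 _ (hAmem i hi)
  have hAD : ∀ i, i < κ.ord → ∀ j, j < κ.ord → i ≠ j →
      #(Aen i ∩ Aen j : Set Ordinal) < Cardinal.lift.{1} κ :=
    fun i hi j hj hij => hMAD.1.2 _ (hAmem i hi) _ (hAmem j hj) (hAinj i hi j hj hij)
  -- facts about the diagonal sequence
  have hbfact : ∀ i, i < κ.ord →
      diagF Aen i ∈ (Aen i \ ⋃ j ∈ Set.Iio i, Aen j) ∩
        Set.Ioi (⨆ j : Set.Iio i, diagF Aen j.1) := by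
    intro i
    induction i using Ordinal.induction with
    | h i ihb =>
      intro hi
      rw [diagF_def]
      apply csInf_mem
      -- the set is nonempty
      have hsmall : #(Aen i ∩ ⋃ j ∈ Set.Iio i, Aen j : Set Ordinal) < Cardinal.lift.{1} κ := by
        have hsub : Aen i ∩ (⋃ j ∈ Set.Iio i, Aen j) ⊆ ⋃ j ∈ Set.Iio i, (Aen i ∩ Aen j) := by
          rintro α ⟨h1, h2⟩
          simp only [Set.mem_iUnion, exists_prop] at h2 ⊢
          obtain ⟨j, hj, hα⟩ := h2
          exact ⟨j, hj, h1, hα⟩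
        refine lt_of_le_of_lt (mk_le_mk_of_subset hsub) (mk_biUnion_lt hreg hi ?_)
        intro j hj
        exact hAD i hi j (hj.trans hi) (ne_of_gt hj)
      have hsup : (⨆ j : Set.Iio i, diagF Aen j.1) < κ.ord := by
        apply sup_lt_K hreg hi
        rintro ⟨j, hj⟩
        rw [Set.mem_Iio] at hj
        have := (ihb j hj (hj.trans hi)).1.1
        exact ((hbig j (hj.trans hi)).1 this)
      -- unbounded part of Aen i exists above hsup
      have hunb : ∀ x < κ.ord, ∃ s ∈ Aen i \ ⋃ j ∈ Set.Iio i, Aen j, x < s := by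
        intro x hx
        by_contra hcon
        push_neg at hcon
        have hbd : #(Aen i \ ⋃ j ∈ Set.Iio i, Aen j : Set Ordinal) < Cardinal.lift.{1} κ := by
          apply mk_lt_of_bounded (hKlim.succ_lt hx)
          intro s hs
          exact Order.lt_succ_iff.2 (hcon s hs)
        have hsplit : Cardinal.lift.{1} κ ≤
            #(Aen i ∩ ⋃ j ∈ Set.Iio i, Aen j : Set Ordinal) +
            #(Aen i \ ⋃ j ∈ Set.Iio i, Aen j : Set Ordinal) := by
          rw [← (hbig i hi).2]
          calc #(Aen i) = #((Aen i ∩ ⋃ j ∈ Set.Iio i, Aen j) ∪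
              (Aen i \ ⋃ j ∈ Set.Iio i, Aen j) : Set Ordinal) := by rw [Set.inter_union_diff]
          _ ≤ _ := Cardinal.mk_union_le _ _
        have : Cardinal.lift.{1} κ < Cardinal.lift.{1} κ := lt_of_le_of_lt hsplit
          (Cardinal.add_lt_of_lt (Cardinal.aleph0_le_lift.2 hreg.1) hsmall hbd)
        exact absurd this (lt_irrefl _)
      obtain ⟨s, hs1, hs2⟩ := hunb _ hsup
      exact ⟨s, hs1, hs2⟩
  have hbK : ∀ i, i < κ.ord → diagF Aen i < κ.ord :=
    fun i hi => (hbig i hi).1 (hbfact i hi).1.1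
  have hbmono : ∀ j i, j < i → i < κ.ord → diagF Aen j < diagF Aen i := by
    intro j i hji hi
    have h1 : diagF Aen j ≤ ⨆ j' : Set.Iio i, diagF Aen j'.1 :=
      Ordinal.le_iSup (fun j' : Set.Iio i => diagF Aen j'.1) ⟨j, hji⟩
    exact lt_of_le_of_lt h1 (hbfact i hi).2
  set B : Set Ordinal := diagF Aen '' Set.Iio κ.ord with hBdef
  have hBsub : ∀ b ∈ B, b < κ.ord := by
    rintro b ⟨i, hi, rfl⟩
    exact hbK i hi
  have hBbig : IsBig κ B := by
    refine ⟨fun b hb => hBsub b hb, ?_⟩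
    apply le_antisymm
    · exact (Cardinal.mk_image_le).trans_eq hIio
    · rw [← hIio]
      apply Cardinal.mk_le_of_injective (f := fun x : Set.Iio κ.ord =>
        (⟨diagF Aen x.1, Set.mem_image_of_mem _ x.2⟩ : B))
      rintro ⟨x, hx⟩ ⟨x', hx'⟩ hxx
      rw [Subtype.mk.injEq] at hxx ⊢
      rcases lt_trichotomy x x' with h | h | h
      · exact absurd hxx (ne_of_lt (hbmono x x' h hx'))
      · exact h
      · exact absurd hxx.symm (ne_of_lt (hbmono x' x h hx))
  obtain ⟨X, hX𝒜, hXB⟩ := hMAD.2.2 B hBbig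
  apply hXB
  set i : Ordinal := ((e.symm ⟨X, hX𝒜⟩ : Set.Iio κ.ord) : Ordinal) with hidef
  have hiK : i < κ.ord := (e.symm ⟨X, hX𝒜⟩).2
  have hAX : Aen i = X := by
    rw [hAval i hiK]
    have h0 : (⟨i, hiK⟩ : Set.Iio κ.ord) = e.symm ⟨X, hX𝒜⟩ := rfl
    rw [h0, Equiv.apply_symm_apply]
  have hi1 : i + 1 < κ.ord := by
    rw [Ordinal.add_one_eq_succ]
    exact hKlim.succ_lt hiK
  have hsub : X ∩ B ⊆ diagF Aen '' Set.Iio (i + 1) := by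
    rintro α ⟨hαX, j, hj, rfl⟩
    refine ⟨j, ?_, rfl⟩
    rw [Set.mem_Iio] at hj ⊢
    rcases le_or_gt j i with h | h
    · exact lt_of_le_of_lt h (lt_add_one i)
    · exfalso
      have : diagF Aen j ∉ Aen i := by
        intro hmem
        have := (hbfact j hj).1.2
        apply this
        simp only [Set.mem_iUnion, exists_prop]
        exact ⟨i, h, hmem⟩
      rw [hAX] at this
      exact this hαX
  show AlmostDisjoint κ X B
  unfold AlmostDisjoint
  calc #(X ∩ B : Set Ordinal) ≤ #(diagF Aen '' Set.Iio (i + 1) : Set Ordinal) :=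
        mk_le_mk_of_subset hsub
  _ ≤ #(Set.Iio (i + 1) : Set Ordinal) := Cardinal.mk_image_le
  _ = Cardinal.lift.{1} (i + 1).card := Ordinal.mk_Iio_ordinal _
  _ < Cardinal.lift.{1} κ := Cardinal.lift_lt.2 (Cardinal.lt_ord.1 hi1)

end Stmt3Proof


/-- If there is a sequence `⟨f_δ : δ < κ⁺⟩` in `κ^κ` such that every
`g ∈ κ^κ` satisfies `{α < κ : g α < f_δ α}` stationary for some `δ`, then there is
a m.a.d. family in `[κ]^κ` of cardinality `κ⁺`, hence `𝔞(κ) = κ⁺`. -/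
theorem stmt3 (κ : Cardinal.{0}) (hreg : κ.IsRegular) (hunc : ℵ₀ < κ)
    (f : Ordinal → Ordinal → Ordinal)
    (hf : ∀ δ < (Order.succ κ).ord, FunOn κ (f δ))
    (hstat : ∀ g, FunOn κ g → ∃ δ < (Order.succ κ).ord,
      IsStationaryIn {α | α < κ.ord ∧ g α < f δ α} κ.ord) :
    (∃ 𝒜 : Set (Set Ordinal), MADFamily κ 𝒜 ∧ #𝒜 = Cardinal.lift.{1} (Order.succ κ)) ∧
      adNum κ = Cardinal.lift.{1} (Order.succ κ) := by
  classical
  obtain ⟨P, hP1, hP2, hP3, hP4⟩ := Stmt3Proof.exists_partition hreg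
  choose E hE using fun δ => Stmt3Proof.exists_surj hreg δ
  have hfd : ∀ δ < (Order.succ κ).ord, ∀ x < κ.ord, f δ x < κ.ord :=
    fun δ hδ x hx => hf δ hδ x hx
  have hstage := Stmt3Proof.stage_all hreg P E f hP1 hP2 hP3 hP4 hE hfd
  have hlk0 : (0 : Cardinal.{1}) < Cardinal.lift.{1} κ :=
    lt_of_lt_of_le aleph0_pos (Cardinal.aleph0_le_lift.2 hreg.1)
  set 𝒜 : Set (Set Ordinal) := {X | ∃ l < κ.ord, X = P l} ∪
    {X | ∃ δ < (Order.succ κ).ord, X = Stmt3Proof.AsetF P E f κ.ord δ} with h𝒜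
  -- each member is big
  have hbig : ∀ X ∈ 𝒜, IsBig κ X := by
    rintro X (⟨l, hl, rfl⟩ | ⟨δ, hδ, rfl⟩)
    · exact ⟨fun α hα => Set.mem_Iio.2 (hP1 l α hα), hP4 l hl⟩
    · exact ⟨fun α hα => Set.mem_Iio.2 ((hstage δ hδ).1 α hα), (hstage δ hδ).2.1⟩
  -- pairwise almost disjoint
  have hADf : ∀ X ∈ 𝒜, ∀ Y ∈ 𝒜, X ≠ Y → AlmostDisjoint κ X Y := by
    rintro X (⟨l, hl, rfl⟩ | ⟨δ, hδ, rfl⟩) Y (⟨l', hl', rfl⟩ | ⟨δ', hδ', rfl⟩) hXY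
    · have hll : l ≠ l' := fun h => hXY (h ▸ rfl)
      show AlmostDisjoint κ (P l) (P l')
      unfold AlmostDisjoint
      rw [hP3 l l' hll]
      simpa using hlk0
    · show AlmostDisjoint κ (P l) (Stmt3Proof.AsetF P E f κ.ord δ')
      unfold AlmostDisjoint
      rw [Set.inter_comm]
      exact (hstage δ' hδ').2.2.1 l
    · exact (hstage δ hδ).2.2.1 l'
    · rcases lt_trichotomy δ δ' with h | h | h
      · show AlmostDisjoint κ _ _
        unfold AlmostDisjoint
        rw [Set.inter_comm]
        exact (hstage δ' hδ').2.2.2.1 δ h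
      · exact absurd (h ▸ rfl) hXY
      · exact (hstage δ hδ).2.2.2.1 δ' h
  -- cardinality of the family
  have hIioK : #(Set.Iio κ.ord : Set Ordinal) = Cardinal.lift.{1} κ := by
    rw [Ordinal.mk_Iio_ordinal, Cardinal.card_ord]
  have hIioΛ : #(Set.Iio (Order.succ κ).ord : Set Ordinal) =
      Cardinal.lift.{1} (Order.succ κ) := by
    rw [Ordinal.mk_Iio_ordinal, Cardinal.card_ord]
  have hAinj : ∀ δ < (Order.succ κ).ord, ∀ δ' < (Order.succ κ).ord,
      Stmt3Proof.AsetF P E f κ.ord δ = Stmt3Proof.AsetF P E f κ.ord δ' → δ = δ' := by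
    intro δ hδ δ' hδ' hEq
    by_contra hne
    rcases lt_trichotomy δ δ' with h | h | h
    · have h1 := (hstage δ' hδ').2.2.2.1 δ h
      rw [← hEq, Set.inter_self, (hstage δ hδ).2.1] at h1
      exact absurd h1 (lt_irrefl _)
    · exact hne h
    · have h1 := (hstage δ hδ).2.2.2.1 δ' h
      rw [hEq, Set.inter_self, (hstage δ' hδ').2.1] at h1
      exact absurd h1 (lt_irrefl _)
  have hmk𝒜 : #𝒜 = Cardinal.lift.{1} (Order.succ κ) := by
    apply le_antisymm
    · have hsub : 𝒜 ⊆ (P '' Set.Iio κ.ord) ∪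
          ((Stmt3Proof.AsetF P E f κ.ord) '' Set.Iio (Order.succ κ).ord) := by
        rintro X (⟨l, hl, rfl⟩ | ⟨δ, hδ, rfl⟩)
        · exact Or.inl (Set.mem_image_of_mem _ (Set.mem_Iio.2 hl))
        · exact Or.inr (Set.mem_image_of_mem _ (Set.mem_Iio.2 hδ))
      calc #𝒜 ≤ #((P '' Set.Iio κ.ord) ∪
            ((Stmt3Proof.AsetF P E f κ.ord) '' Set.Iio (Order.succ κ).ord) : Set (Set Ordinal)) :=
          mk_le_mk_of_subset hsub
      _ ≤ #(P '' Set.Iio κ.ord : Set (Set Ordinal)) +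
            #((Stmt3Proof.AsetF P E f κ.ord) '' Set.Iio (Order.succ κ).ord : Set (Set Ordinal)) :=
          Cardinal.mk_union_le _ _
      _ ≤ #(Set.Iio κ.ord : Set Ordinal) + #(Set.Iio (Order.succ κ).ord : Set Ordinal) :=
          add_le_add Cardinal.mk_image_le Cardinal.mk_image_le
      _ = Cardinal.lift.{1} κ + Cardinal.lift.{1} (Order.succ κ) := by rw [hIioK, hIioΛ]
      _ = Cardinal.lift.{1} (Order.succ κ) := Cardinal.add_eq_right
          (Cardinal.aleph0_le_lift.2 (hreg.1.trans (Order.le_succ κ)))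
          (Cardinal.lift_le.2 (Order.le_succ κ))
    · rw [← hIioΛ]
      apply Cardinal.mk_le_of_injective (f := fun δ : Set.Iio (Order.succ κ).ord =>
        (⟨Stmt3Proof.AsetF P E f κ.ord δ.1, Or.inr ⟨δ.1, δ.2, rfl⟩⟩ : 𝒜))
      rintro ⟨δ, hδ⟩ ⟨δ', hδ'⟩ hdd
      exact Subtype.ext (hAinj δ hδ δ' hδ' (congrArg Subtype.val hdd))
  -- maximality
  have hmax : ∀ B, IsBig κ B → ∃ X ∈ 𝒜, ¬ AlmostDisjoint κ X B := by
    intro B hB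
    by_contra hcon
    push_neg at hcon
    have hBsub : ∀ b ∈ B, b < κ.ord := fun b hb => Set.mem_Iio.1 (hB.1 hb)
    have hBunb : ∀ x < κ.ord, ∃ b ∈ B, x < b :=
      Stmt3Proof.unbounded_of_mk_eq hreg hBsub hB.2
    have hgFun : FunOn κ (succIn B) := by
      intro o ho
      have hne : {β | β ∈ B ∧ o < β}.Nonempty := by
        obtain ⟨b, hb, hob⟩ := hBunb o ho
        exact ⟨b, hb, hob⟩
      exact hBsub _ (csInf_mem hne).1
    obtain ⟨δ, hδΛ, hstatδ⟩ := hstat (succIn B) hgFun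
    have hVsmall : ∀ j < κ.ord,
        #(B ∩ (P j ∪ Stmt3Proof.prevD P E f κ.ord δ (E δ j)) : Set Ordinal) <
          Cardinal.lift.{1} κ := by
      intro j hj
      have h1 : #(B ∩ P j : Set Ordinal) < Cardinal.lift.{1} κ := by
        have := hcon (P j) (Or.inl ⟨j, hj, rfl⟩)
        unfold AlmostDisjoint at this
        rwa [Set.inter_comm] at this
      have h2 : #(B ∩ Stmt3Proof.prevD P E f κ.ord δ (E δ j) : Set Ordinal) <
          Cardinal.lift.{1} κ := by
        by_cases h : E δ j < δ
        · rw [show Stmt3Proof.prevD P E f κ.ord δ (E δ j) = Stmt3Proof.AsetF P E f κ.ord (E δ j) from by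
            unfold Stmt3Proof.prevD; rw [dif_pos h]]
          have := hcon (Stmt3Proof.AsetF P E f κ.ord (E δ j)) (Or.inr ⟨E δ j, h.trans hδΛ, rfl⟩)
          unfold AlmostDisjoint at this
          rwa [Set.inter_comm] at this
        · rw [show Stmt3Proof.prevD P E f κ.ord δ (E δ j) = ∅ from by
            unfold Stmt3Proof.prevD; rw [dif_neg h]]
          simpa using hlk0
      calc #(B ∩ (P j ∪ Stmt3Proof.prevD P E f κ.ord δ (E δ j)) : Set Ordinal)
          = #((B ∩ P j) ∪ (B ∩ Stmt3Proof.prevD P E f κ.ord δ (E δ j)) : Set Ordinal) := by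
            rw [Set.inter_union_distrib_left]
      _ ≤ _ := Cardinal.mk_union_le _ _
      _ < Cardinal.lift.{1} κ :=
          Cardinal.add_lt_of_lt (Cardinal.aleph0_le_lift.2 hreg.1) h1 h2
    have hcatch := Stmt3Proof.catch_lemma hreg hunc P E f
      (hstage δ hδΛ).2.2.2.2.1 (hstage δ hδΛ).2.2.2.2.2 hBsub hBunb hVsmall hstatδ
    have hABmk : #(Stmt3Proof.AsetF P E f κ.ord δ ∩ B : Set Ordinal) = Cardinal.lift.{1} κ := by
      apply Stmt3Proof.mk_eq_of_unbounded hreg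
      · rintro s ⟨hs, -⟩
        exact (hstage δ hδΛ).1 s hs
      · intro x hx
        obtain ⟨b, h1, h2, h3⟩ := hcatch x hx
        exact ⟨b, ⟨h1, h2⟩, h3⟩
    have hADδ := hcon (Stmt3Proof.AsetF P E f κ.ord δ) (Or.inr ⟨δ, hδΛ, rfl⟩)
    unfold AlmostDisjoint at hADδ
    rw [hABmk] at hADδ
    exact absurd hADδ (lt_irrefl _)
  have hMAD : MADFamily κ 𝒜 := by
    refine ⟨⟨hbig, hADf⟩, ?_, hmax⟩
    rw [hmk𝒜]
    exact Cardinal.lift_le.2 (Order.le_succ κ)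
  refine ⟨⟨𝒜, hMAD, hmk𝒜⟩, ?_⟩
  unfold adNum
  have hmem : Cardinal.lift.{1} (Order.succ κ) ∈
      {c : Cardinal.{1} | ∃ 𝒜 : Set (Set Ordinal), MADFamily κ 𝒜 ∧ #𝒜 = c} :=
    ⟨𝒜, hMAD, hmk𝒜⟩
  apply le_antisymm
  · exact csInf_le' hmem
  · apply le_csInf ⟨_, hmem⟩
    rintro c ⟨𝒜', hMAD', rfl⟩
    have h1 : Cardinal.lift.{1} κ ≤ #𝒜' := hMAD'.2.1
    have h2 : #𝒜' ≠ Cardinal.lift.{1} κ := Stmt3Proof.no_mad_of_size_kappa hreg hMAD'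
    have h3 : Cardinal.lift.{1} κ < #𝒜' := lt_of_le_of_ne h1 (Ne.symm h2)
    rw [Cardinal.lift_succ]
    exact Order.succ_le_of_lt h3
end

section
/- Let κ be a regular uncountable cardinal, and let ⟨A_γ : γ < δ⟩ (for some δ with κ ≤ δ < κ⁺) be a sequence of pairwise almost disjoint sets in [κ]^κ. Let e : κ → δ be a bijection and let E = {μ_ξ : ξ < κ} ⊆ κ be a club, enumerated increasingly. Define B_ξ = {α : μ_ξ ≤ α < μ_{ξ+1} and α ∉ A_{e(ν)} for all ν < μ_ξ}, and A = ⋃_{ξ<κ} B_ξ. Then for every γ < δ, |A_γ ∩ A| < κ. -/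
open Cardinal Set

/-- Given a pairwise a.d. sequence `⟨A_γ : γ < δ⟩` (`κ ≤ δ < κ⁺`) in `[κ]^κ`,
a bijection `e : κ → δ`, a club `E` enumerated increasingly by `μ`, and the sets
`B_ξ = {α : μ_ξ ≤ α < μ_{ξ+1}, ∀ ν < μ_ξ, α ∉ A_{e(ν)}}`, the set `A = ⋃_{ξ<κ} B_ξ`
satisfies `|A_γ ∩ A| < κ` for all `γ < δ`. -/
theorem stmt5 (κ : Cardinal.{0}) (hreg : κ.IsRegular) (hunc : ℵ₀ < κ)
    (δ : Ordinal) (hδ1 : κ.ord ≤ δ) (hδ2 : δ < (Order.succ κ).ord)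
    (A : Ordinal → Set Ordinal) (hbig : ∀ γ < δ, IsBig κ (A γ))
    (had : ∀ γ < δ, ∀ γ' < δ, γ ≠ γ' → AlmostDisjoint κ (A γ) (A γ'))
    (e : Ordinal → Ordinal) (he : Set.BijOn e (Set.Iio κ.ord) (Set.Iio δ))
    (μ : Ordinal → Ordinal) (E : Set Ordinal) (hE : IsClubIn E κ.ord)
    (hμmono : StrictMonoOn μ (Set.Iio κ.ord)) (hμrange : μ '' Set.Iio κ.ord = E)
    (B : Ordinal → Set Ordinal)
    (hB : ∀ ξ < κ.ord, B ξ = {α | μ ξ ≤ α ∧ α < μ (ξ + 1) ∧ ∀ ν < μ ξ, α ∉ A (e ν)}) :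
    ∀ γ < δ, #((A γ ∩ ⋃ ξ ∈ Set.Iio κ.ord, B ξ) : Set Ordinal) < Cardinal.lift.{1} κ := by
  intro γ hγ
  obtain ⟨ν₀, hν₀κ, hν₀e⟩ := he.surjOn hγ
  have hlim : Order.IsSuccLimit κ.ord := Cardinal.isSuccLimit_ord hreg.aleph0_le
  have hν₀1 : ν₀ + 1 < κ.ord := hlim.succ_lt hν₀κ
  obtain ⟨m, hmE, hm⟩ := hE.2.1 (ν₀ + 1) hν₀1
  obtain ⟨ξ₀, hξ₀κ, hξ₀⟩ : ∃ ξ₀ < κ.ord, μ ξ₀ = m := by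
    have := hμrange ▸ hmE
    obtain ⟨ξ₀, hξ₀κ, hξ₀⟩ := this
    exact ⟨ξ₀, hξ₀κ, hξ₀⟩
  have hμξ₀ : μ ξ₀ < κ.ord := by
    have : μ ξ₀ ∈ E := hξ₀ ▸ hmE
    exact hE.1 this
  have hsub : (A γ ∩ ⋃ ξ ∈ Set.Iio κ.ord, B ξ) ⊆ Set.Iio (μ ξ₀) := by
    rintro α ⟨hαA, hαU⟩
    simp only [Set.mem_iUnion] at hαU
    obtain ⟨ξ, hξκ, hαB⟩ := hαU
    rw [hB ξ hξκ] at hαB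
    obtain ⟨h1, h2, h3⟩ := hαB
    rcases lt_or_ge ξ ξ₀ with hlt | hle
    · have hs : ξ + 1 ≤ ξ₀ := by
        rw [Ordinal.add_one_eq_succ]; rwa [← Order.succ_le_iff] at hlt
      have : μ (ξ + 1) ≤ μ ξ₀ :=
        hμmono.monotoneOn (hlim.succ_lt hξκ) hξ₀κ hs
      exact lt_of_lt_of_le h2 this
    · exfalso
      have hν₀lt : ν₀ < μ ξ := by
        have h1 : μ ξ₀ ≤ μ ξ := hμmono.monotoneOn hξ₀κ hξκ hle
        have h2 : ν₀ + 1 ≤ μ ξ₀ := hξ₀ ▸ hm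
        have := le_trans h2 h1
        exact lt_of_lt_of_le (Order.lt_succ ν₀) (by rwa [Ordinal.add_one_eq_succ] at this)
      exact h3 ν₀ hν₀lt (hν₀e ▸ hαA)
  calc #((A γ ∩ ⋃ ξ ∈ Set.Iio κ.ord, B ξ) : Set Ordinal)
      ≤ #(Set.Iio (μ ξ₀) : Set Ordinal) := Cardinal.mk_le_mk_of_subset hsub
    _ = Cardinal.lift.{1} (μ ξ₀).card := Ordinal.mk_Iio_ordinal _
    _ < Cardinal.lift.{1} κ := by
        rw [Cardinal.lift_lt]
        exact Cardinal.lt_ord.mp hμξ₀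
end

section
/- Let μ ≥ ℶ_ω be any cardinal. Then there exists an uncountable regular cardinal θ < ℶ_ω and a family 𝒫 ⊆ [μ]^{≤θ} with |𝒫| ≤ μ such that for every u ∈ [μ]^θ there exists v ∈ 𝒫 with v ⊆ u and |v| ≥ ℵ₀. -/
open Cardinal Set

/-- (From the Revised GCH) For every `μ ≥ ℶ_ω` there exist an uncountable
regular `θ < ℶ_ω` and `𝒫 ⊆ [μ]^{≤θ}` with `|𝒫| ≤ μ` such that every `u ∈ [μ]^θ` has an
infinite subset `v ∈ 𝒫`. -/
theorem stmt9 (hRGCH : RevisedGCH) (μ : Cardinal.{0})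
    (hμ : Cardinal.beth Ordinal.omega0 ≤ μ) :
    ∃ θ : Cardinal.{0}, θ.IsRegular ∧ ℵ₀ < θ ∧ θ < Cardinal.beth Ordinal.omega0 ∧
      ∃ P : Set (Set Ordinal),
        (∀ v ∈ P, v ⊆ Set.Iio μ.ord ∧ #v ≤ Cardinal.lift.{1} θ) ∧
        #P ≤ Cardinal.lift.{1} μ ∧
        ∀ u : Set Ordinal, u ⊆ Set.Iio μ.ord → #u = Cardinal.lift.{1} θ →
          ∃ v ∈ P, v ⊆ u ∧ (ℵ₀ : Cardinal.{1}) ≤ #v := by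
  have hSL : (Cardinal.beth Ordinal.omega0).IsStrongLimit :=
    Cardinal.isStrongLimit_beth.mpr (Ordinal.isSuccLimit_omega0.isSuccPrelimit)
  have hBa : ℵ₀ < Cardinal.beth Ordinal.omega0 := by
    have := Cardinal.beth_strictMono (show (0:Ordinal) < Ordinal.omega0 from Ordinal.omega0_pos)
    simpa using this
  obtain ⟨σ, hσ, hwp⟩ := hRGCH (Cardinal.beth Ordinal.omega0) μ hBa hSL hμ
  set θ : Cardinal.{0} := Order.succ (σ ⊔ ℵ₀) with hθ
  have haθ : ℵ₀ < θ := lt_of_le_of_lt le_sup_right (Order.lt_succ _)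
  have hθB : θ < Cardinal.beth Ordinal.omega0 := by
    have h1 : σ ⊔ ℵ₀ < Cardinal.beth Ordinal.omega0 := max_lt hσ hBa
    have h2 := hSL.2 h1
    exact lt_of_le_of_lt (Order.succ_le_of_lt (Cardinal.cantor _)) h2
  have hreg : θ.IsRegular := Cardinal.isRegular_succ le_sup_right
  have hwpθ : weakPower μ θ = Cardinal.lift.{1} μ :=
    hwp θ (le_trans le_sup_left (le_of_lt (Order.lt_succ _))) hθB
  have hne : { c | ∃ P : Set (Set Ordinal),
      (∀ v ∈ P, v ⊆ Set.Iio μ.ord ∧ #v ≤ Cardinal.lift.{1} θ) ∧ #P = c ∧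
      ∀ u : Set Ordinal, u ⊆ Set.Iio μ.ord → #u = Cardinal.lift.{1} θ →
        ∃ P₀ ⊆ P, #P₀ < Cardinal.lift.{1} θ ∧ u = ⋃₀ P₀ }.Nonempty := by
    refine ⟨_, {v | v ⊆ Set.Iio μ.ord ∧ #v ≤ Cardinal.lift.{1} θ}, fun v hv => hv, rfl, ?_⟩
    intro u hu hcard
    refine ⟨{u}, ?_, ?_, by simp⟩
    · intro v hv; rcases hv with rfl; exact ⟨hu, le_of_eq hcard⟩
    · simpa using lt_of_lt_of_le Cardinal.one_lt_aleph0
        (le_of_lt (by simpa using Cardinal.lift_lt.{0,1}.2 haθ : (ℵ₀:Cardinal.{1}) < Cardinal.lift.{1} θ))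
  have hmem := csInf_mem hne
  rw [show sInf _ = weakPower μ θ from rfl, hwpθ] at hmem
  obtain ⟨P, hP1, hP2, hP3⟩ := hmem
  have haθ' : (ℵ₀ : Cardinal.{1}) < Cardinal.lift.{1} θ := by
    simpa using Cardinal.lift_lt.{0,1}.2 haθ
  refine ⟨θ, hreg, haθ, hθB, P, hP1, le_of_eq hP2, ?_⟩
  intro u hu hcard
  obtain ⟨P₀, hP₀P, hP₀card, hP₀u⟩ := hP3 u hu hcard
  by_contra h
  push_neg at h
  have hsmall : ∀ v ∈ P₀, #v < ℵ₀ := fun v hv =>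
    h v (hP₀P hv) (hP₀u ▸ Set.subset_sUnion_of_mem hv)
  have : #u < Cardinal.lift.{1} θ := by
    rw [hP₀u]
    calc #(⋃₀ P₀) ≤ #P₀ * ⨆ s : P₀, #(s : Set Ordinal) := Cardinal.mk_sUnion_le _
    _ ≤ #P₀ * ℵ₀ := by
        gcongr
        exact ciSup_le' fun s => le_of_lt (hsmall s s.2)
    _ < Cardinal.lift.{1} θ := Cardinal.mul_lt_of_lt (le_of_lt haθ') hP₀card haθ'
  exact absurd hcard (ne_of_lt this)
end

section
/- Let κ be a regular uncountable cardinal, E₁ a club in κ, f ∈ κ^κ, and let E_f = {ξ ∈ E₁ : ξ is closed under f}. Suppose A ∈ [κ]^κ and δ < κ satisfy A \ δ ⊆ set(E_f, E₁). Define g_A(β) = s_A(s_{E₁}(β)) for β < κ. Then for all ζ with δ ≤ ζ < κ, f(ζ) < g_A(ζ). Hence f ≤* g_A. -/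
open Cardinal Set

/-- Let `E₁` be a club in regular uncountable `κ`, `f ∈ κ^κ`,
`E_f = {ξ ∈ E₁ : ξ closed under f}`. If `A ∈ [κ]^κ` and `δ < κ` satisfy
`A \ δ ⊆ set(E_f, E₁)`, then `g_A(β) = s_A(s_{E₁}(β))` satisfies `f(ζ) < g_A(ζ)`
for all `δ ≤ ζ < κ`; hence `f ≤* g_A`. -/
theorem stmt13 (κ : Cardinal.{0}) (hreg : κ.IsRegular) (hunc : ℵ₀ < κ)
    (E₁ : Set Ordinal) (hE₁ : IsClubIn E₁ κ.ord)
    (f : Ordinal → Ordinal) (hf : FunOn κ f)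
    (A : Set Ordinal) (hA : IsBig κ A) (δ : Ordinal) (hδ : δ < κ.ord)
    (hsub : A \ Set.Iio δ ⊆ setSet {ξ ∈ E₁ | ∀ β < ξ, f β < ξ} E₁) :
    (∀ ζ, δ ≤ ζ → ζ < κ.ord → f ζ < succIn A (succIn E₁ ζ)) ∧
      LeStar κ f (fun β => succIn A (succIn E₁ β)) := by
  have hord : Order.IsSuccLimit κ.ord := Cardinal.isSuccLimit_ord hreg.aleph0_le
  have key : ∀ ζ, δ ≤ ζ → ζ < κ.ord → f ζ < succIn A (succIn E₁ ζ) := by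
    intro ζ hδζ hζ
    -- s := succIn E₁ ζ
    obtain ⟨e, heE, hle⟩ := hE₁.2.1 (ζ + 1) (hord.succ_lt hζ)
    have hsne : {β | β ∈ E₁ ∧ ζ < β}.Nonempty :=
      ⟨e, heE, lt_of_lt_of_le (Order.lt_succ ζ) hle⟩
    have hs : succIn E₁ ζ ∈ {β | β ∈ E₁ ∧ ζ < β} := csInf_mem hsne
    have hsκ : succIn E₁ ζ < κ.ord := hE₁.1 hs.1
    -- t := succIn A s
    have htne : {β | β ∈ A ∧ succIn E₁ ζ < β}.Nonempty := by
      by_contra h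
      have h : ∀ x ∈ A, x ≤ succIn E₁ ζ :=
        fun x hx => le_of_not_gt (fun hl => h ⟨x, hx, hl⟩)
      have hAsub : A ⊆ Set.Iio (succIn E₁ ζ + 1) := by
        intro x hx
        exact lt_of_le_of_lt (h x hx) (Order.lt_succ _)
      have h1 : #A ≤ #(Set.Iio (succIn E₁ ζ + 1) : Set Ordinal) :=
        Cardinal.mk_le_mk_of_subset hAsub
      rw [hA.2, Ordinal.mk_Iio_ordinal] at h1
      have h2 : (succIn E₁ ζ + 1).card < κ :=
        Cardinal.lt_ord.1 (hord.succ_lt hsκ)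
      exact absurd (Cardinal.lift_le.1 h1) (not_le.2 h2)
    have ht : succIn A (succIn E₁ ζ) ∈ {β | β ∈ A ∧ succIn E₁ ζ < β} := csInf_mem htne
    have htA : succIn A (succIn E₁ ζ) ∈ A \ Set.Iio δ := by
      refine ⟨ht.1, ?_⟩
      simp only [Set.mem_Iio, not_lt]
      exact hδζ.trans (hs.2.trans ht.2).le
    have := hsub htA
    simp only [setSet, blockSet, Set.mem_iUnion, Set.mem_setOf_eq, Set.mem_sep_iff] at this
    obtain ⟨ξ, ⟨hξE, hξcl⟩, hξle, hξlt⟩ := this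
    have hζξ : ζ < ξ := by
      by_contra h
      push_neg at h
      have : succIn E₁ ξ ≤ succIn E₁ ζ :=
        csInf_le (OrderBot.bddBelow _) ⟨hs.1, lt_of_le_of_lt h hs.2⟩
      exact absurd (hξlt.trans_le this) (not_lt.2 ht.2.le)
    exact lt_of_lt_of_le (hξcl ζ hζξ) hξle
  refine ⟨key, ?_⟩
  have hsub2 : {α : Ordinal | α < κ.ord ∧ succIn A (succIn E₁ α) < f α} ⊆ Set.Iio δ := by
    intro α ⟨hα, hbad⟩
    by_contra h
    simp only [Set.mem_Iio, not_lt] at h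
    exact absurd hbad (not_lt.2 (key α h hα).le)
  calc #({α : Ordinal | α < κ.ord ∧ succIn A (succIn E₁ α) < f α} : Set Ordinal)
      ≤ #(Set.Iio δ : Set Ordinal) := Cardinal.mk_le_mk_of_subset hsub2
    _ = Cardinal.lift.{1} δ.card := Ordinal.mk_Iio_ordinal δ
    _ < Cardinal.lift.{1} κ := Cardinal.lift_lt.2 (Cardinal.lt_ord.1 hδ)
end
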